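/- arXiv:math/0412350 — 2 statements merged into one kernel-verified Lean document; each statement's English description precedes it below -/
import Mathlib

section
/- The set-indexed process X (having an almost surely unique additive extension to 𝒞(u)) is set-Markov if and only if for all B, B' ∈ 𝒜(u) with B ⊆ B', the σ-fields ℱ_B and σ(X_{B'}) are conditionally independent given σ(X_B). -/
open MeasureTheory ProbabilityTheory Set
open scoped ENNReal

noncomputable section

namespace SetIndexedMarkov

variable {T : Type*} [TopologicalSpace T] {Ω : Type*} [mΩ : MeasurableSpace Ω]

/-- `𝒜(u)`: the collection of all finite unions of sets in `𝒜`. -/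
def Au (𝒜 : Set (Set T)) : Set (Set T) :=
  {B | ∃ s : Finset (Set T), ↑s ⊆ 𝒜 ∧ s.Nonempty ∧ B = ⋃₀ ↑s}

/-- `𝒞`: the collection of all sets of the form `A \ B` with `A ∈ 𝒜`, `B ∈ 𝒜(u)`. -/
def CC (𝒜 : Set (Set T)) : Set (Set T) :=
  {C | ∃ A ∈ 𝒜, ∃ B ∈ Au 𝒜, C = A \ B}

/-- `∅' := ⋂ {A ∈ 𝒜 : A ≠ ∅}`, the minimal set of `𝒜`. -/
def emptyPrime (𝒜 : Set (Set T)) : Set T := ⋂₀ {A ∈ 𝒜 | A ≠ ∅}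

/-- The standing structural assumptions on the indexing collection `𝒜`: a semilattice of
closed subsets of the compact Hausdorff space `T`, containing `∅` and `T`, closed under
arbitrary (nonempty) intersections, and containing no two disjoint nonempty sets. -/
structure IsIndexing (𝒜 : Set (Set T)) : Prop where
  closed : ∀ A ∈ 𝒜, IsClosed A
  empty_mem : ∅ ∈ 𝒜
  univ_mem : Set.univ ∈ 𝒜
  sInter_mem : ∀ S ⊆ 𝒜, S.Nonempty → ⋂₀ S ∈ 𝒜
  no_disjoint : ∀ A ∈ 𝒜, ∀ B ∈ 𝒜, A.Nonempty → B.Nonempty → (A ∩ B).Nonempty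

/-- The σ-field generated by a real random variable. -/
def sigOf (f : Ω → ℝ) : MeasurableSpace Ω := MeasurableSpace.comap f inferInstance

/-- The minimal filtration `ℱ_B = σ(X_A : A ∈ 𝒜, A ⊆ B)`. -/
def filt (𝒜 : Set (Set T)) (X : Set T → Ω → ℝ) (B : Set T) : MeasurableSpace Ω :=
  ⨆ A ∈ {A | A ∈ 𝒜 ∧ A ⊆ B}, sigOf (X A)

/-- `G` and `H` are conditionally independent given `K` (under `P`):
`E[1_G 1_H | K] = E[1_G | K] ⬝ E[1_H | K]` a.s. for all `G`-, `H`-measurable sets. -/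
def CondIndepGiven (P : Measure Ω) (G H K : MeasurableSpace Ω) : Prop :=
  ∀ g h : Set Ω, MeasurableSet[G] g → MeasurableSet[H] h →
    (P[((g ∩ h).indicator fun _ => (1 : ℝ)) | K]) =ᵐ[P]
      fun ω => (P[(g.indicator fun _ => (1 : ℝ)) | K]) ω *
        (P[(h.indicator fun _ => (1 : ℝ)) | K]) ω

/-- Every `X_B`, `B ∈ 𝒜(u)`, is a (measurable) random variable. -/
def MeasOnAu (𝒜 : Set (Set T)) (X : Set T → Ω → ℝ) : Prop :=
  ∀ B ∈ Au 𝒜, Measurable (X B)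

/-- The process `X` (viewed on `𝒜(u)`) is almost surely finitely additive, i.e. it is the
(a.s. unique) additive extension of its restriction to `𝒜`: it vanishes a.s. at `∅` and is
a.s. modular on the lattice `𝒜(u)`. -/
def AddExtension (𝒜 : Set (Set T)) (P : Measure Ω) (X : Set T → Ω → ℝ) : Prop :=
  (∀ᵐ ω ∂P, X ∅ ω = 0) ∧
    ∀ B ∈ Au 𝒜, ∀ B' ∈ Au 𝒜,
      ∀ᵐ ω ∂P, X (B ∪ B') ω + X (B ∩ B') ω = X B ω + X B' ω

/-- `X` is set-Markov: for all `A ∈ 𝒜`, `B ∈ 𝒜(u)`, `ℱ_B ⟂ σ(X_{A∖B}) | σ(X_B)`,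
where `X_{A∖B} = X_{A∪B} - X_B`. -/
def SetMarkov (𝒜 : Set (Set T)) (P : Measure Ω) (X : Set T → Ω → ℝ) : Prop :=
  ∀ A ∈ 𝒜, ∀ B ∈ Au 𝒜,
    CondIndepGiven P (filt 𝒜 X B) (sigOf fun ω => X (A ∪ B) ω - X B ω) (sigOf (X B))

/-- A flow: an increasing map `f : [0,a] → 𝒜(u)`. -/
def IsFlow (𝒜 : Set (Set T)) (a : ℝ) (f : ℝ → Set T) : Prop :=
  (∀ t ∈ Set.Icc (0 : ℝ) a, f t ∈ Au 𝒜) ∧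
    ∀ s t : ℝ, 0 ≤ s → s ≤ t → t ≤ a → f s ⊆ f t

/-- A continuous flow. -/
def IsContinuousFlow (𝒜 : Set (Set T)) (a : ℝ) (f : ℝ → Set T) : Prop :=
  IsFlow 𝒜 a f ∧
    (∀ t ∈ Set.Icc (0 : ℝ) a, ∀ u : ℕ → ℝ, (∀ n, u n ∈ Set.Icc t a) → Antitone u →
      Filter.Tendsto u Filter.atTop (nhds t) → f t = ⋂ n, f (u n)) ∧
    (∀ t ∈ Set.Icc (0 : ℝ) a, ∀ u : ℕ → ℝ, (∀ n, u n ∈ Set.Icc 0 t) → Monotone u →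
      Filter.Tendsto u Filter.atTop (nhds t) → f t = closure (⋃ n, f (u n)))

/-- A simple flow: a continuous flow starting at `∅'` which is piecewise `𝒜`-valued. -/
def IsSimpleFlow (𝒜 : Set (Set T)) (a : ℝ) (f : ℝ → Set T) : Prop :=
  IsContinuousFlow 𝒜 a f ∧ f 0 = emptyPrime 𝒜 ∧
    ∃ (n : ℕ) (t : ℕ → ℝ) (g : ℕ → ℝ → Set T),
      0 < n ∧ t 0 = 0 ∧ t n = a ∧ (∀ i < n, t i < t (i + 1)) ∧
      (∀ i < n, ∀ s ∈ Set.Icc (t i) (t (i + 1)), g (i + 1) s ∈ 𝒜) ∧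
      (∀ i < n, ∀ s u : ℝ, t i ≤ s → s ≤ u → u ≤ t (i + 1) → g (i + 1) s ⊆ g (i + 1) u) ∧
      (∀ i < n, ∀ s ∈ Set.Icc (t i) (t (i + 1)),
        f s = (⋃ j ∈ Finset.Icc 1 i, g j (t j)) ∪ g (i + 1) s)

/-- A finite sub-semilattice of `𝒜`: a finite nonempty subfamily closed under intersection. -/
def IsSubSemilattice (𝒜 : Set (Set T)) (L : Finset (Set T)) : Prop :=
  ↑L ⊆ 𝒜 ∧ L.Nonempty ∧ ∀ A ∈ L, ∀ B ∈ L, A ∩ B ∈ L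

/-- A consistent ordering `{A₀ = ∅', A₁, …, Aₙ}` of the finite sub-semilattice `L`. -/
structure ConsistentOrdering (𝒜 : Set (Set T)) (L : Finset (Set T)) (n : ℕ)
    (A : ℕ → Set T) : Prop where
  zero : A 0 = emptyPrime 𝒜
  first : A 1 = ⋂₀ ↑L
  mem : ∀ i, 1 ≤ i → i ≤ n → A i ∈ L
  inj : ∀ i j, 1 ≤ i → i ≤ n → 1 ≤ j → j ≤ n → A i = A j → i = j
  surj : ∀ B ∈ L, ∃ i, 1 ≤ i ∧ i ≤ n ∧ A i = B
  consistent : ∀ i, 1 ≤ i → i ≤ n → ∀ B ∈ L, B ⊆ A i → B ≠ A i → ∃ j < i, A j = B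

/-- `⋃_{j=1}^{i} A_j`. -/
def Uu (A : ℕ → Set T) (i : ℕ) : Set T := ⋃ j ∈ Finset.Icc 1 i, A j

/-- `⋃_{j=0}^{i} A_j`. -/
def U0 (A : ℕ → Set T) (i : ℕ) : Set T := ⋃ j ∈ Finset.range (i + 1), A j

/-- The left neighbourhood `C_j = A_j ∖ ⋃_{l=0}^{j-1} A_l`. -/
def leftNbhd (A : ℕ → Set T) (j : ℕ) : Set T := A j \ ⋃ l ∈ Finset.range j, A l

/-- A (set-indexed) transition system `𝒬 = (Q_{BB'})_{B ⊆ B'}`. -/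
def IsTransitionSystem (𝒜 : Set (Set T)) (Q : Set T → Set T → Kernel ℝ ℝ) : Prop :=
  (∀ B ∈ Au 𝒜, ∀ B' ∈ Au 𝒜, B ⊆ B' → IsMarkovKernel (Q B B')) ∧
    (∀ B ∈ Au 𝒜, ∀ x : ℝ, Q B B x = Measure.dirac x) ∧
    (∀ B ∈ Au 𝒜, ∀ B' ∈ Au 𝒜, ∀ B'' ∈ Au 𝒜, B ⊆ B' → B' ⊆ B'' →
      ∀ (x : ℝ) (Γ : Set ℝ), MeasurableSet Γ →
        Q B B'' x Γ = ∫⁻ y, Q B' B'' y Γ ∂(Q B B' x))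

/-- `X` is `𝒬`-Markov: `P[X_{B'} ∈ Γ | ℱ_B] = Q_{BB'}(X_B; Γ)` a.s. -/
def QMarkov (𝒜 : Set (Set T)) (P : Measure Ω) (X : Set T → Ω → ℝ)
    (Q : Set T → Set T → Kernel ℝ ℝ) : Prop :=
  ∀ B ∈ Au 𝒜, ∀ B' ∈ Au 𝒜, B ⊆ B' → ∀ Γ : Set ℝ, MeasurableSet Γ →
    (P[fun ω => Γ.indicator (fun _ => (1 : ℝ)) (X B' ω) | filt 𝒜 X B]) =ᵐ[P]
      fun ω => (Q B B' (X B ω) Γ).toReal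

/-- Iterated integration of the coordinates `i+1, …, i+m` of a path, each coordinate `j+1`
being integrated with respect to the kernel `κ j` applied at the coordinate `j`. -/
def stepInt (κ : ℕ → Kernel ℝ ℝ) : ℕ → ℕ → ((ℕ → ℝ) → ℝ≥0∞) → (ℕ → ℝ) → ℝ≥0∞
  | _, 0, f, x => f x
  | i, m + 1, f, x =>
      ∫⁻ y, stepInt κ (i + 1) m f (Function.update x (i + 1) y) ∂(κ i (x i))

/-- The iterated integral
`∫ … ∫ f(x₀,…,xₙ) κ_{n-1}(x_{n-1}; dxₙ) ⋯ κ_0(x₀; dx₁) μ(dx₀)`. -/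
def kiter (μ : Measure ℝ) (κ : ℕ → Kernel ℝ ℝ) (n : ℕ) (f : (ℕ → ℝ) → ℝ≥0∞) : ℝ≥0∞ :=
  ∫⁻ x₀, stepInt κ 0 n f (fun _ => x₀) ∂μ

/-- The sequence of kernels `Q_{∅'A₁}, Q_{A₁, A₁∪A₂}, …, Q_{⋃_{j<n}A_j, ⋃_{j≤n}A_j}`
attached to a consistent ordering `A` by a set-indexed transition system `Q`. -/
def kerSeq (Q : Set T → Set T → Kernel ℝ ℝ) (A : ℕ → Set T) (i : ℕ) : Kernel ℝ ℝ :=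
  Q (if i = 0 then A 0 else Uu A i) (Uu A (i + 1))

/-- The integrand `1_{Γ₀}(y₀) 1_{Γ₁}(y₁) ∏_{i=2}^{n} 1_{Γ_i}(y_{π(i)} - y_{π(i)-1})`. -/
def PermIntegrand (Γ : ℕ → Set ℝ) (π : ℕ → ℕ) (n : ℕ) (y : ℕ → ℝ) : ℝ≥0∞ :=
  (Γ 0).indicator 1 (y 0) * (Γ 1).indicator 1 (y 1) *
    ∏ i ∈ Finset.Icc 2 n, (Γ i).indicator 1 (y (π i) - y (π i - 1))

/-- Assumption 1: the finite dimensional distributions built from `𝒬` over the left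
neighbourhoods of a finite sub-semilattice do not depend on the consistent ordering. -/
def Assumption1 (𝒜 : Set (Set T)) (Q : Set T → Set T → Kernel ℝ ℝ) (μ : Measure ℝ) : Prop :=
  ∀ (L : Finset (Set T)) (n : ℕ) (A A' : ℕ → Set T) (π : Equiv.Perm ℕ),
    IsSubSemilattice 𝒜 L → ConsistentOrdering 𝒜 L n A → ConsistentOrdering 𝒜 L n A' →
    π 1 = 1 → (∀ i, ¬(1 ≤ i ∧ i ≤ n) → π i = i) →
    (∀ i, 1 ≤ i → i ≤ n → A i = A' (π i)) →
    ∀ Γ : ℕ → Set ℝ, (∀ i, MeasurableSet (Γ i)) →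
      kiter μ (kerSeq Q A) n (PermIntegrand Γ id n) =
        kiter μ (kerSeq Q A') n (PermIntegrand Γ π n)

/-- `X` has independent increments. -/
def IndepIncrements (𝒜 : Set (Set T)) (P : Measure Ω) (X : Set T → Ω → ℝ) : Prop :=
  ∀ (n : ℕ) (A B : ℕ → Set T),
    (∀ i < n, A i ∈ 𝒜) → (∀ i < n, B i ∈ Au 𝒜) →
    (∀ i < n, ∀ j < n, i ≠ j → Disjoint (A i \ B i) (A j \ B j)) →
    iIndepFun
      (fun i : Fin n => fun ω => X (A i ∪ B i) ω - X (B i) ω) P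

/-- The trace `X^f` of `X` along the flow `f` is Markov with the one-dimensional
transition system `Qf`. -/
def QMarkovFlow (𝒜 : Set (Set T)) (P : Measure Ω) (X : Set T → Ω → ℝ)
    (a : ℝ) (f : ℝ → Set T) (Qf : ℝ → ℝ → Kernel ℝ ℝ) : Prop :=
  ∀ s t : ℝ, 0 ≤ s → s < t → t ≤ a → ∀ Γ : Set ℝ, MeasurableSet Γ →
    (P[fun ω => Γ.indicator (fun _ => (1 : ℝ)) (X (f t) ω) | filt 𝒜 X (f s)]) =ᵐ[P]
      fun ω => (Qf s t (X (f s) ω) Γ).toReal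

/-- A one-dimensional transition system on the time interval `[0,a]`. -/
def IsFlowTransition (a : ℝ) (Q : ℝ → ℝ → Kernel ℝ ℝ) : Prop :=
  (∀ s t : ℝ, 0 ≤ s → s < t → t ≤ a → IsMarkovKernel (Q s t)) ∧
    ∀ s t u : ℝ, 0 ≤ s → s < t → t < u → u ≤ a →
      ∀ (x : ℝ) (Γ : Set ℝ), MeasurableSet Γ →
        Q s u x Γ = ∫⁻ y, Q t u y Γ ∂(Q s t x)

/-- The simple flow `f` connects the sets of a finite sub-semilattice in the sense of the
consistent ordering `A`, with partition `t` of `[0,a]`. -/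
def Connects (𝒜 : Set (Set T)) (n : ℕ) (A : ℕ → Set T) (a : ℝ) (t : ℕ → ℝ)
    (f : ℝ → Set T) : Prop :=
  t 0 = 0 ∧ t n = a ∧ (∀ i < n, t i < t (i + 1)) ∧
    (∀ i ≤ n, f (t i) = Uu A i) ∧
    ∃ g : ℕ → ℝ → Set T,
      (∀ i < n, ∀ s ∈ Set.Icc (t i) (t (i + 1)), g (i + 1) s ∈ 𝒜) ∧
      (∀ i < n, ∀ s u : ℝ, t i ≤ s → s ≤ u → u ≤ t (i + 1) → g (i + 1) s ⊆ g (i + 1) u) ∧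
      (∀ i < n, g (i + 1) (t i) = A i ∧ g (i + 1) (t (i + 1)) = A (i + 1)) ∧
      (∀ i < n, ∀ s ∈ Set.Icc (t i) (t (i + 1)),
        f s = (⋃ j ∈ Finset.Icc 1 i, A j) ∪ g (i + 1) s)

/-- `ℱ_{∂B} = σ(X_A : A ∈ 𝒜, A ⊆ B, A ⊄ B°)`. -/
def filtBoundary (𝒜 : Set (Set T)) (X : Set T → Ω → ℝ) (B : Set T) : MeasurableSpace Ω :=
  ⨆ A ∈ {A | A ∈ 𝒜 ∧ A ⊆ B ∧ ¬ A ⊆ interior B}, sigOf (X A)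

/-- `ℱ_{B^c} = σ(X_A : A ∈ 𝒜, A ⊄ B)`. -/
def filtComp (𝒜 : Set (Set T)) (X : Set T → Ω → ℝ) (B : Set T) : MeasurableSpace Ω :=
  ⨆ A ∈ {A | A ∈ 𝒜 ∧ ¬ A ⊆ B}, sigOf (X A)

/-- The initial distribution of `X`: the law of `X_{∅'}`. -/
def InitialLaw (P : Measure Ω) (X : Set T → Ω → ℝ) (𝒜 : Set (Set T)) : Measure ℝ :=
  P.map (X (emptyPrime 𝒜))

/-- The measure `Q_{BB'}(x; ·) = F_{B'∖B}(· - x)`, i.e. the law of `X_{B'} - X_B + x`. -/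
def incLaw (P : Measure Ω) (X : Set T → Ω → ℝ) (B B' : Set T) (x : ℝ) : Measure ℝ :=
  P.map fun ω => X B' ω - X B ω + x


section Proposition1Aux
set_option linter.unusedSectionVars false

open MeasureTheory Filter

namespace Prop1Aux

variable {Ω : Type*} [mΩ : MeasurableSpace Ω] {P : Measure Ω} [IsProbabilityMeasure P]

/-- Real indicator function of a set. -/
def ind (s : Set Ω) : Ω → ℝ := s.indicator fun _ => 1

lemma ind_nonneg (s : Set Ω) (ω : Ω) : 0 ≤ ind s ω := by
  by_cases h : ω ∈ s <;> simp [ind, h]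

lemma ind_le_one (s : Set Ω) (ω : Ω) : ind s ω ≤ 1 := by
  by_cases h : ω ∈ s <;> simp [ind, h]

lemma norm_ind_le_one (s : Set Ω) (ω : Ω) : ‖ind s ω‖ ≤ 1 := by
  rw [Real.norm_eq_abs, abs_le]
  exact ⟨by linarith [ind_nonneg s ω], ind_le_one s ω⟩

lemma norm_mul_le_one {a b : ℝ} (ha : ‖a‖ ≤ 1) (hb : ‖b‖ ≤ 1) : ‖a * b‖ ≤ 1 := by
  rw [norm_mul]
  calc ‖a‖ * ‖b‖ ≤ 1 * 1 := mul_le_mul ha hb (norm_nonneg b) zero_le_one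
    _ = 1 := one_mul 1

lemma sm_ind {m : MeasurableSpace Ω} {s : Set Ω} (hs : MeasurableSet[m] s) :
    StronglyMeasurable[m] (ind s) :=
  stronglyMeasurable_const.indicator hs

lemma int_ind {s : Set Ω} (hs : MeasurableSet s) : Integrable (ind s) P :=
  (integrable_const 1).indicator hs

lemma condexp_ind_nonneg {m : MeasurableSpace Ω} (s : Set Ω) :
    0 ≤ᵐ[P] P[ind s|m] :=
  condExp_nonneg (Filter.Eventually.of_forall (ind_nonneg s))

lemma condexp_ind_le_one {m : MeasurableSpace Ω} (hm : m ≤ mΩ) {s : Set Ω}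
    (hs : MeasurableSet[mΩ] s) : P[ind s|m] ≤ᵐ[P] fun _ => (1 : ℝ) := by
  have h := condExp_mono (μ := P) (m := m) (int_ind (mΩ := mΩ) hs) (integrable_const 1)
    (Filter.Eventually.of_forall (ind_le_one s))
  rwa [condExp_const hm] at h

lemma norm_condexp_ind_le_one {m : MeasurableSpace Ω} (hm : m ≤ mΩ) {s : Set Ω}
    (hs : MeasurableSet[mΩ] s) : ∀ᵐ ω ∂P, ‖(P[ind s|m]) ω‖ ≤ 1 := by
  filter_upwards [condexp_ind_nonneg (mΩ := mΩ) (P := P) (m := m) s,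
    condexp_ind_le_one (mΩ := mΩ) hm hs] with ω h1 h2
  simp only [Pi.zero_apply] at h1
  rw [Real.norm_eq_abs, abs_le]
  exact ⟨by linarith, h2⟩

lemma integral_mul_condexp {m : MeasurableSpace Ω} (hm : m ≤ mΩ) {ψ f : Ω → ℝ} {c : ℝ}
    (hψ : StronglyMeasurable[m] ψ) (hψb : ∀ᵐ ω ∂P, ‖ψ ω‖ ≤ c) (hf : Integrable f P) :
    ∫ ω, ψ ω * f ω ∂P = ∫ ω, ψ ω * (P[f|m]) ω ∂P := by
  have h1 : P[ψ * f|m] =ᵐ[P] ψ * P[f|m] :=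
    condExp_stronglyMeasurable_mul_of_bound hm hψ hf c hψb
  calc ∫ ω, ψ ω * f ω ∂P = ∫ ω, (P[ψ * f|m]) ω ∂P := (integral_condExp hm).symm
    _ = ∫ ω, (ψ * P[f|m]) ω ∂P := integral_congr_ae h1
    _ = ∫ ω, ψ ω * (P[f|m]) ω ∂P := rfl

lemma setIntegral_eq_ind {s : Set Ω} (hs : MeasurableSet s) (f : Ω → ℝ) :
    ∫ ω in s, f ω ∂P = ∫ ω, ind s ω * f ω ∂P := by
  rw [← integral_indicator hs]
  refine integral_congr_ae (Filter.Eventually.of_forall fun ω => ?_)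
  by_cases h : ω ∈ s <;> simp [ind, h]

lemma setIntegral_ext_of_generateFrom {C : Set (Set Ω)} (hπ : IsPiSystem C)
    (hle : MeasurableSpace.generateFrom C ≤ mΩ) {f₁ f₂ : Ω → ℝ}
    (h₁ : Integrable f₁ P) (h₂ : Integrable f₂ P)
    (huniv : ∫ ω, f₁ ω ∂P = ∫ ω, f₂ ω ∂P)
    (hbase : ∀ s ∈ C, ∫ ω in s, f₁ ω ∂P = ∫ ω in s, f₂ ω ∂P) :
    ∀ s, MeasurableSet[MeasurableSpace.generateFrom C] s →
      ∫ ω in s, f₁ ω ∂P = ∫ ω in s, f₂ ω ∂P := by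
  intro s hs
  refine MeasurableSpace.induction_on_inter (m := MeasurableSpace.generateFrom C)
    (C := fun t _ => ∫ ω in t, f₁ ω ∂P = ∫ ω in t, f₂ ω ∂P) (s := C)
    rfl hπ (by simp) hbase ?_ ?_ s hs
  · intro t htm ht
    have htm' : MeasurableSet t := hle _ htm
    have e1 := integral_add_compl htm' h₁
    have e2 := integral_add_compl htm' h₂
    linarith
  · intro g hdis hgm hg
    have hgm' : ∀ i, MeasurableSet (g i) := fun i => hle _ (hgm i)
    rw [integral_iUnion hgm' hdis h₁.integrableOn,
        integral_iUnion hgm' hdis h₂.integrableOn]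
    exact tsum_congr hg

lemma pair_pi {G K : MeasurableSpace Ω} :
    IsPiSystem {s : Set Ω | ∃ g k, MeasurableSet[G] g ∧ MeasurableSet[K] k ∧ s = g ∩ k} := by
  rintro s ⟨g1, k1, hg1, hk1, rfl⟩ t ⟨g2, k2, hg2, hk2, rfl⟩ -
  refine ⟨g1 ∩ g2, k1 ∩ k2, hg1.inter hg2, hk1.inter hk2, ?_⟩
  ext ω
  simp only [Set.mem_inter_iff]
  tauto

lemma sup_eq_generateFrom (G K : MeasurableSpace Ω) :
    G ⊔ K = MeasurableSpace.generateFrom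
      {s : Set Ω | ∃ g k, MeasurableSet[G] g ∧ MeasurableSet[K] k ∧ s = g ∩ k} := by
  apply le_antisymm
  · refine sup_le ?_ ?_
    · intro s hs
      exact MeasurableSpace.measurableSet_generateFrom
        ⟨s, Set.univ, hs, MeasurableSet.univ, (Set.inter_univ s).symm⟩
    · intro s hs
      exact MeasurableSpace.measurableSet_generateFrom
        ⟨Set.univ, s, MeasurableSet.univ, hs, (Set.univ_inter s).symm⟩
  · refine MeasurableSpace.generateFrom_le ?_
    rintro s ⟨g, k, hg, hk, rfl⟩
    exact ((le_sup_left : G ≤ G ⊔ K) _ hg).inter ((le_sup_right : K ≤ G ⊔ K) _ hk)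

lemma condexp_ind_sup {G H K : MeasurableSpace Ω} (hG : G ≤ mΩ) (hH : H ≤ mΩ) (hK : K ≤ mΩ)
    (hcig : CondIndepGiven (mΩ := mΩ) P G H K) {h : Set Ω} (hh : MeasurableSet[H] h) :
    P[ind h|G ⊔ K] =ᵐ[P] P[ind h|K] := by
  letI : MeasurableSpace Ω := mΩ
  have hGK : G ⊔ K ≤ mΩ := sup_le hG hK
  have hhm : MeasurableSet[mΩ] h := hH _ hh
  have hinth : Integrable (ind h) P := int_ind hhm
  have key : ∀ s, MeasurableSet[G ⊔ K] s →
      ∫ ω in s, (P[ind h|K]) ω ∂P = ∫ ω in s, ind h ω ∂P := by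
    have hgen := sup_eq_generateFrom G K
    intro s hs
    rw [hgen] at hs
    refine setIntegral_ext_of_generateFrom pair_pi (by rw [← hgen]; exact hGK)
      integrable_condExp hinth (integral_condExp hK) ?_ s hs
    rintro t ⟨g, k, hg, hk, rfl⟩
    have hgm : MeasurableSet[mΩ] g := hG _ hg
    have hkm : MeasurableSet[mΩ] k := hK _ hk
    have hghm : MeasurableSet[mΩ] (g ∩ h) := hgm.inter hhm
    have hfac : P[ind (g ∩ h)|K] =ᵐ[P]
        fun ω => (P[ind g|K]) ω * (P[ind h|K]) ω := hcig g h hg hh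
    have b1 : ∀ᵐ ω ∂P, ‖ind k ω * (P[ind h|K]) ω‖ ≤ 1 := by
      filter_upwards [norm_condexp_ind_le_one (mΩ := mΩ) hK hhm] with ω h1
      exact norm_mul_le_one (norm_ind_le_one k ω) h1
    calc ∫ ω in g ∩ k, (P[ind h|K]) ω ∂P
        = ∫ ω, (ind k ω * (P[ind h|K]) ω) * ind g ω ∂P := by
          rw [setIntegral_eq_ind (hgm.inter hkm)]
          refine integral_congr_ae (Eventually.of_forall fun ω => ?_)
          by_cases h1 : ω ∈ g <;> by_cases h2 : ω ∈ k <;>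
            simp [ind, Set.indicator_apply, h1, h2] <;> ring
      _ = ∫ ω, (ind k ω * (P[ind h|K]) ω) * (P[ind g|K]) ω ∂P :=
          integral_mul_condexp hK ((sm_ind hk).mul stronglyMeasurable_condExp) b1 (int_ind hgm)
      _ = ∫ ω, ind k ω * (P[ind (g ∩ h)|K]) ω ∂P := by
          refine integral_congr_ae ?_
          filter_upwards [hfac] with ω hω
          rw [hω]; ring
      _ = ∫ ω, ind k ω * ind (g ∩ h) ω ∂P :=
          (integral_mul_condexp hK (sm_ind hk)
            (Eventually.of_forall (norm_ind_le_one k)) (int_ind hghm)).symm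
      _ = ∫ ω in g ∩ k, ind h ω ∂P := by
          rw [setIntegral_eq_ind (hgm.inter hkm)]
          refine integral_congr_ae (Eventually.of_forall fun ω => ?_)
          by_cases h1 : ω ∈ g <;> by_cases h2 : ω ∈ k <;> by_cases h3 : ω ∈ h <;>
            simp [ind, Set.indicator_apply, h1, h2, h3] <;> ring
  exact (ae_eq_condExp_of_forall_setIntegral_eq hGK hinth
    (fun s _ _ => integrable_condExp.integrableOn)
    (fun s hs _ => key s hs)
    ((stronglyMeasurable_condExp (m := K) (μ := P) (f := ind h)).mono
      (le_sup_right (a := G))).aestronglyMeasurable).symm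

lemma integral_mul_ind_eq {G H K : MeasurableSpace Ω} (hG : G ≤ mΩ) (hH : H ≤ mΩ) (hK : K ≤ mΩ)
    (hcig : CondIndepGiven (mΩ := mΩ) P G H K) {h : Set Ω} (hh : MeasurableSet[H] h)
    {ζ : Ω → ℝ} {c : ℝ} (hζ : StronglyMeasurable[G ⊔ K] ζ) (hζb : ∀ᵐ ω ∂P, ‖ζ ω‖ ≤ c) :
    ∫ ω, ζ ω * ind h ω ∂P = ∫ ω, ζ ω * (P[ind h|K]) ω ∂P := by
  letI : MeasurableSpace Ω := mΩ
  rw [integral_mul_condexp (sup_le hG hK) hζ hζb (int_ind (hH _ hh))]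
  refine integral_congr_ae ?_
  filter_upwards [condexp_ind_sup hG hH hK hcig hh] with ω hω
  rw [hω]

lemma cig_mono {G H H' K : MeasurableSpace Ω} (hH' : H' ≤ H)
    (hcig : CondIndepGiven (mΩ := mΩ) P G H K) : CondIndepGiven (mΩ := mΩ) P G H' K :=
  fun g h hg hh => hcig g h hg (hH' _ hh)

lemma cig_symm {G H K : MeasurableSpace Ω} (hcig : CondIndepGiven (mΩ := mΩ) P G H K) :
    CondIndepGiven (mΩ := mΩ) P H G K := by
  intro a b ha hb
  have h1 : P[ind (b ∩ a)|K] =ᵐ[P]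
      fun ω => (P[ind b|K]) ω * (P[ind a|K]) ω := hcig b a hb ha
  show P[ind (a ∩ b)|K] =ᵐ[P] fun ω => (P[ind a|K]) ω * (P[ind b|K]) ω
  rw [Set.inter_comm a b]
  exact h1.trans (Eventually.of_forall fun ω => mul_comm _ _)

lemma cig_self {G K : MeasurableSpace Ω} (hG : G ≤ mΩ) (hK : K ≤ mΩ) :
    CondIndepGiven (mΩ := mΩ) P G K K := by
  letI : MeasurableSpace Ω := mΩ
  intro g k hg hk
  show P[ind (g ∩ k)|K] =ᵐ[P] fun ω => (P[ind g|K]) ω * (P[ind k|K]) ω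
  have e1 : ind (g ∩ k) = ind k * ind g := by
    funext ω
    by_cases h1 : ω ∈ g <;> by_cases h2 : ω ∈ k <;>
      simp [ind, Set.indicator_apply, h1, h2]
  have p1 : P[ind k * ind g|K] =ᵐ[P] ind k * P[ind g|K] :=
    condExp_stronglyMeasurable_mul_of_bound hK (sm_ind hk) (int_ind (hG _ hg)) 1
      (Eventually.of_forall (norm_ind_le_one k))
  have p2 : P[ind k|K] = ind k :=
    condExp_of_stronglyMeasurable hK (sm_ind hk) (int_ind (hK _ hk))
  rw [e1, p2]
  exact p1.trans (Eventually.of_forall fun ω => mul_comm _ _)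

lemma cig_generateFrom {G K : MeasurableSpace Ω} {C : Set (Set Ω)} (hG : G ≤ mΩ) (hK : K ≤ mΩ)
    (hπ : IsPiSystem C) (hC : MeasurableSpace.generateFrom C ≤ mΩ)
    (hbase : ∀ g, MeasurableSet[G] g → ∀ c ∈ C,
      P[ind (g ∩ c)|K] =ᵐ[P] fun ω => (P[ind g|K]) ω * (P[ind c|K]) ω) :
    CondIndepGiven (mΩ := mΩ) P G (MeasurableSpace.generateFrom C) K := by
  letI : MeasurableSpace Ω := mΩ
  intro g h hg hh
  show P[ind (g ∩ h)|K] =ᵐ[P] fun ω => (P[ind g|K]) ω * (P[ind h|K]) ω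
  have hgm : MeasurableSet[mΩ] g := hG _ hg
  have hhm : MeasurableSet[mΩ] h := hC _ hh
  have bρ : ∀ᵐ ω ∂P, ‖(P[ind g|K]) ω‖ ≤ 1 := norm_condexp_ind_le_one (mΩ := mΩ) hK hgm
  have bkρ : ∀ k : Set Ω, ∀ᵐ ω ∂P, ‖ind k ω * (P[ind g|K]) ω‖ ≤ 1 := by
    intro k
    filter_upwards [bρ] with ω h1
    exact norm_mul_le_one (norm_ind_le_one k ω) h1
  have main : ∀ k, MeasurableSet[K] k → ∀ s, MeasurableSet[MeasurableSpace.generateFrom C] s →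
      ∫ ω in s, (ind g ω * ind k ω) ∂P = ∫ ω in s, (ind k ω * (P[ind g|K]) ω) ∂P := by
    intro k hk
    have hkm : MeasurableSet[mΩ] k := hK _ hk
    refine setIntegral_ext_of_generateFrom hπ hC ?_ ?_ ?_ ?_
    · exact (int_ind hkm).bdd_mul (sm_ind (m := mΩ) hgm).aestronglyMeasurable
        (Eventually.of_forall (norm_ind_le_one g))
    · exact integrable_condExp.bdd_mul (sm_ind (m := mΩ) hkm).aestronglyMeasurable
        (Eventually.of_forall (norm_ind_le_one k))
    · have h0 : ∫ ω, ind g ω * ind k ω ∂P = ∫ ω, ind k ω * ind g ω ∂P :=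
        integral_congr_ae (Eventually.of_forall fun ω => mul_comm _ _)
      rw [h0]
      exact integral_mul_condexp hK (sm_ind hk)
        (Eventually.of_forall (norm_ind_le_one k)) (int_ind hgm)
    · intro c hcC
      have hcm : MeasurableSet[mΩ] c := hC _ (MeasurableSpace.measurableSet_generateFrom hcC)
      have hfac : P[ind (g ∩ c)|K] =ᵐ[P]
          fun ω => (P[ind g|K]) ω * (P[ind c|K]) ω := hbase g hg c hcC
      calc ∫ ω in c, ind g ω * ind k ω ∂P
          = ∫ ω, ind k ω * ind (g ∩ c) ω ∂P := by
            rw [setIntegral_eq_ind hcm]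
            refine integral_congr_ae (Eventually.of_forall fun ω => ?_)
            by_cases h1 : ω ∈ g <;> by_cases h2 : ω ∈ c <;>
              simp [ind, Set.indicator_apply, h1, h2] <;> ring
        _ = ∫ ω, ind k ω * (P[ind (g ∩ c)|K]) ω ∂P :=
            integral_mul_condexp hK (sm_ind hk)
              (Eventually.of_forall (norm_ind_le_one k)) (int_ind (hgm.inter hcm))
        _ = ∫ ω, (ind k ω * (P[ind g|K]) ω) * (P[ind c|K]) ω ∂P := by
            refine integral_congr_ae ?_
            filter_upwards [hfac] with ω hω
            rw [hω]; ring
        _ = ∫ ω, (ind k ω * (P[ind g|K]) ω) * ind c ω ∂P :=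
            (integral_mul_condexp hK ((sm_ind hk).mul stronglyMeasurable_condExp)
              (bkρ k) (int_ind hcm)).symm
        _ = ∫ ω in c, ind k ω * (P[ind g|K]) ω ∂P := by
            rw [setIntegral_eq_ind hcm]
            refine integral_congr_ae (Eventually.of_forall fun ω => ?_)
            ring
  have cand_meas : AEStronglyMeasurable[K]
      (fun ω => (P[ind g|K]) ω * (P[ind h|K]) ω) P :=
    (stronglyMeasurable_condExp.mul stronglyMeasurable_condExp).aestronglyMeasurable
  have cand_int : Integrable (fun ω => (P[ind g|K]) ω * (P[ind h|K]) ω) P := by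
    refine Integrable.mono' (integrable_const 1)
      ((stronglyMeasurable_condExp.mul stronglyMeasurable_condExp).mono hK).aestronglyMeasurable ?_
    filter_upwards [bρ, norm_condexp_ind_le_one (mΩ := mΩ) hK hhm] with ω h1 h2
    exact norm_mul_le_one h1 h2
  refine (ae_eq_condExp_of_forall_setIntegral_eq hK (int_ind (hgm.inter hhm))
    (fun s _ _ => cand_int.integrableOn) ?_ cand_meas).symm
  intro k hk _
  have hkm : MeasurableSet[mΩ] k := hK _ hk
  calc ∫ ω in k, (P[ind g|K]) ω * (P[ind h|K]) ω ∂P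
      = ∫ ω, (ind k ω * (P[ind g|K]) ω) * (P[ind h|K]) ω ∂P := by
        rw [setIntegral_eq_ind hkm]
        refine integral_congr_ae (Eventually.of_forall fun ω => ?_)
        ring
    _ = ∫ ω, (ind k ω * (P[ind g|K]) ω) * ind h ω ∂P :=
        (integral_mul_condexp hK ((sm_ind hk).mul stronglyMeasurable_condExp)
          (bkρ k) (int_ind hhm)).symm
    _ = ∫ ω in h, ind k ω * (P[ind g|K]) ω ∂P := by
        rw [setIntegral_eq_ind hhm]
        refine integral_congr_ae (Eventually.of_forall fun ω => ?_)
        ring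
    _ = ∫ ω in h, ind g ω * ind k ω ∂P := (main k hk h hh).symm
    _ = ∫ ω in k, ind (g ∩ h) ω ∂P := by
        rw [setIntegral_eq_ind hhm, setIntegral_eq_ind hkm]
        refine integral_congr_ae (Eventually.of_forall fun ω => ?_)
        by_cases h1 : ω ∈ g <;> by_cases h2 : ω ∈ h <;>
          simp [ind, Set.indicator_apply, h1, h2] <;> ring

lemma cig_sup {G H K : MeasurableSpace Ω} (hG : G ≤ mΩ) (hH : H ≤ mΩ) (hK : K ≤ mΩ)
    (hcig : CondIndepGiven (mΩ := mΩ) P G H K) : CondIndepGiven (mΩ := mΩ) P G (H ⊔ K) K := by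
  letI : MeasurableSpace Ω := mΩ
  have hgen := sup_eq_generateFrom H K
  have hle : MeasurableSpace.generateFrom
      {s : Set Ω | ∃ h k, MeasurableSet[H] h ∧ MeasurableSet[K] k ∧ s = h ∩ k} ≤ mΩ := by
    rw [← hgen]; exact sup_le hH hK
  refine cig_mono (le_of_eq hgen) (cig_generateFrom hG hK pair_pi hle ?_)
  rintro g hg c ⟨h, k, hh, hk, rfl⟩
  have h1 : P[ind (g ∩ h)|K] =ᵐ[P]
      fun ω => (P[ind g|K]) ω * (P[ind h|K]) ω := hcig g h hg hh
  have e1 : ind (g ∩ (h ∩ k)) = ind k * ind (g ∩ h) := by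
    funext ω
    by_cases d1 : ω ∈ g <;> by_cases d2 : ω ∈ h <;> by_cases d3 : ω ∈ k <;>
      simp [ind, Set.indicator_apply, d1, d2, d3]
  have e2 : ind (h ∩ k) = ind k * ind h := by
    funext ω
    by_cases d2 : ω ∈ h <;> by_cases d3 : ω ∈ k <;>
      simp [ind, Set.indicator_apply, d2, d3]
  have p1 : P[ind k * ind (g ∩ h)|K] =ᵐ[P] ind k * P[ind (g ∩ h)|K] :=
    condExp_stronglyMeasurable_mul_of_bound hK (sm_ind hk)
      (int_ind ((hG _ hg).inter (hH _ hh))) 1 (Eventually.of_forall (norm_ind_le_one k))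
  have p2 : P[ind k * ind h|K] =ᵐ[P] ind k * P[ind h|K] :=
    condExp_stronglyMeasurable_mul_of_bound hK (sm_ind hk)
      (int_ind (hH _ hh)) 1 (Eventually.of_forall (norm_ind_le_one k))
  rw [e1, e2]
  filter_upwards [p1, p2, h1] with ω q1 q2 q3
  simp only [Pi.mul_apply] at q1 q2
  rw [q1, q2, q3]
  ring

lemma ind_inter_apply (s t : Set Ω) (ω : Ω) : ind (s ∩ t) ω = ind s ω * ind t ω := by
  by_cases h1 : ω ∈ s <;> by_cases h2 : ω ∈ t <;>
    simp [ind, Set.indicator_apply, h1, h2]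

lemma ind_congr {s t : Set Ω} {ω : Ω} (h : ω ∈ s ↔ ω ∈ t) : ind s ω = ind t ω := by
  unfold ind
  by_cases hs : ω ∈ s
  · rw [Set.indicator_of_mem hs, Set.indicator_of_mem (h.mp hs)]
  · rw [Set.indicator_of_notMem hs, Set.indicator_of_notMem fun ht => hs (h.mpr ht)]

lemma simpleFunc_factor {Z : Ω → ℝ} (s : @SimpleFunc Ω (sigOf Z) ℝ) :
    ∃ F : ℝ → ℝ, Measurable F ∧ ∀ ω, F (Z ω) = s ω := by
  refine @SimpleFunc.induction Ω ℝ (sigOf Z) _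
    (fun s => ∃ F : ℝ → ℝ, Measurable F ∧ ∀ ω, F (Z ω) = s ω) ?_ ?_ s
  · intro c t ht
    have ht' : ∃ S, MeasurableSet S ∧ Z ⁻¹' S = t := MeasurableSpace.measurableSet_comap.mp ht
    obtain ⟨S, hS, rfl⟩ := ht'
    classical
    refine ⟨S.indicator fun _ => c, measurable_const.indicator hS, fun ω => ?_⟩
    by_cases h : Z ω ∈ S <;>
      simp [SimpleFunc.piecewise_apply, Set.indicator_apply, Set.mem_preimage, h]
  · rintro f g - ⟨F, hF, hFf⟩ ⟨G2, hG2, hG2g⟩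
    refine ⟨F + G2, hF.add hG2, fun ω => ?_⟩
    simp [Pi.add_apply, hFf ω, hG2g ω]

lemma factor_of_sigOf {Z ρ : Ω → ℝ} (hρ : StronglyMeasurable[sigOf Z] ρ) :
    ∃ F : ℝ → ℝ, Measurable F ∧ ∀ ω, F (Z ω) = ρ ω := by
  choose F hFm hF using fun n => simpleFunc_factor (hρ.approx n)
  refine ⟨fun x => Filter.liminf (fun n => F n x) Filter.atTop, Measurable.liminf hFm,
    fun ω => ?_⟩
  have h1 : (fun n => F n (Z ω)) = fun n => (hρ.approx n) ω := by
    funext n; exact hF n ω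
  show Filter.liminf (fun n => F n (Z ω)) Filter.atTop = ρ ω
  rw [h1]
  exact (hρ.tendsto_approx ω).liminf_eq

lemma cig_chain {G G' : MeasurableSpace Ω} {Z Z' W : Ω → ℝ}
    (hG' : G' ≤ mΩ) (hGG' : G ≤ G')
    (hZ : Measurable[mΩ] Z) (hZ' : Measurable[mΩ] Z') (hW : Measurable[mΩ] W)
    (hrep : ∃ Y : Ω → ℝ, StronglyMeasurable[G] Y ∧ Z =ᵐ[P] Y)
    (hsm : CondIndepGiven (mΩ := mΩ) P G' (sigOf W) (sigOf Z'))
    (hih : CondIndepGiven (mΩ := mΩ) P G (sigOf Z') (sigOf Z)) :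
    CondIndepGiven (mΩ := mΩ) P G (sigOf W ⊔ sigOf Z') (sigOf Z) := by
  letI : MeasurableSpace Ω := mΩ
  have hG : G ≤ mΩ := hGG'.trans hG'
  have hK : sigOf Z ≤ mΩ := hZ.comap_le
  have hK' : sigOf Z' ≤ mΩ := hZ'.comap_le
  have hHW : sigOf W ≤ mΩ := hW.comap_le
  have hgen := sup_eq_generateFrom (sigOf W) (sigOf Z')
  have hle : MeasurableSpace.generateFrom
      {s : Set Ω | ∃ h k, MeasurableSet[sigOf W] h ∧ MeasurableSet[sigOf Z'] k ∧ s = h ∩ k}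
        ≤ mΩ := by
    rw [← hgen]; exact sup_le hHW hK'
  refine cig_mono (le_of_eq hgen) (cig_generateFrom hG hK pair_pi hle ?_)
  rintro g hg c ⟨h, k', hh, hk', rfl⟩
  obtain ⟨Y, hYm, hZY⟩ := hrep
  have hgm : MeasurableSet[mΩ] g := hG _ hg
  have hhm : MeasurableSet[mΩ] h := hHW _ hh
  have hk'm : MeasurableSet[mΩ] k' := hK' _ hk'
  have hhk'm : MeasurableSet[mΩ] (h ∩ k') := hhm.inter hk'm
  obtain ⟨Fρ, hFρ, hFρZ⟩ :=
    factor_of_sigOf (Z := Z) (stronglyMeasurable_condExp (μ := P) (f := ind g))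
  have hρρt : P[ind g|sigOf Z] =ᵐ[P] fun ω => Fρ (Y ω) := by
    filter_upwards [hZY] with ω hω
    rw [← hFρZ ω, hω]
  have hρtm : StronglyMeasurable[G] (fun ω => Fρ (Y ω)) :=
    (hFρ.comp hYm.measurable).stronglyMeasurable
  have hρb : ∀ᵐ ω ∂P, ‖(P[ind g|sigOf Z]) ω‖ ≤ 1 := norm_condexp_ind_le_one hK hgm
  have hρtb : ∀ᵐ ω ∂P, ‖Fρ (Y ω)‖ ≤ 1 := by
    filter_upwards [hρρt, hρb] with ω h1 h2
    rw [← h1]; exact h2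
  have hφb : ∀ᵐ ω ∂P, ‖(P[ind h|sigOf Z']) ω‖ ≤ 1 := norm_condexp_ind_le_one hK' hhm
  show P[ind (g ∩ (h ∩ k'))|sigOf Z] =ᵐ[P]
    fun ω => (P[ind g|sigOf Z]) ω * (P[ind (h ∩ k')|sigOf Z]) ω
  have cand_meas : AEStronglyMeasurable[sigOf Z]
      (fun ω => (P[ind g|sigOf Z]) ω * (P[ind (h ∩ k')|sigOf Z]) ω) P :=
    (stronglyMeasurable_condExp.mul stronglyMeasurable_condExp).aestronglyMeasurable
  have cand_int : Integrable
      (fun ω => (P[ind g|sigOf Z]) ω * (P[ind (h ∩ k')|sigOf Z]) ω) P := by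
    refine Integrable.mono' (integrable_const 1)
      ((stronglyMeasurable_condExp.mul stronglyMeasurable_condExp).mono hK).aestronglyMeasurable ?_
    filter_upwards [hρb, norm_condexp_ind_le_one hK hhk'm] with ω h1 h2
    exact norm_mul_le_one h1 h2
  refine (ae_eq_condExp_of_forall_setIntegral_eq hK (int_ind (hgm.inter hhk'm))
    (fun s _ _ => cand_int.integrableOn) ?_ cand_meas).symm
  intro k hk _
  have hkm : MeasurableSet[mΩ] k := hK _ hk
  obtain ⟨Γ, hΓ, rfl⟩ := MeasurableSpace.measurableSet_comap.mp hk
  have hktG : MeasurableSet[G] (Y ⁻¹' Γ) := hYm.measurable hΓ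
  have hktm : MeasurableSet[mΩ] (Y ⁻¹' Γ) := hG _ hktG
  have hkkt : ∀ᵐ ω ∂P, ind (Z ⁻¹' Γ) ω = ind (Y ⁻¹' Γ) ω := by
    filter_upwards [hZY] with ω hω
    exact ind_congr (by simp [Set.mem_preimage, hω])
  have bkρ : ∀ᵐ ω ∂P, ‖ind (Z ⁻¹' Γ) ω * (P[ind g|sigOf Z]) ω‖ ≤ 1 := by
    filter_upwards [hρb] with ω h1
    exact norm_mul_le_one (norm_ind_le_one _ ω) h1
  -- measurability of the three multiplier functions
  have s1 : MeasurableSet[G' ⊔ sigOf Z'] (Y ⁻¹' Γ) :=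
    (le_sup_left : G' ≤ G' ⊔ sigOf Z') _ (hGG' _ hktG)
  have s2 : MeasurableSet[G' ⊔ sigOf Z'] k' :=
    (le_sup_right : sigOf Z' ≤ G' ⊔ sigOf Z') _ hk'
  have s3 : MeasurableSet[G' ⊔ sigOf Z'] g :=
    (le_sup_left : G' ≤ G' ⊔ sigOf Z') _ (hGG' _ hg)
  have zeta1 : StronglyMeasurable[G' ⊔ sigOf Z']
      (fun ω => ind (Y ⁻¹' Γ) ω * Fρ (Y ω) * ind k' ω) :=
    (((sm_ind s1).mul (hρtm.mono (hGG'.trans le_sup_left))).mul (sm_ind s2))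
  have zeta1b : ∀ᵐ ω ∂P, ‖ind (Y ⁻¹' Γ) ω * Fρ (Y ω) * ind k' ω‖ ≤ 1 := by
    filter_upwards [hρtb] with ω h1
    exact norm_mul_le_one (norm_mul_le_one (norm_ind_le_one _ ω) h1) (norm_ind_le_one _ ω)
  have zeta2 : StronglyMeasurable[sigOf Z' ⊔ sigOf Z]
      (fun ω => ind k' ω * (P[ind h|sigOf Z']) ω * ind (Z ⁻¹' Γ) ω) :=
    ((sm_ind ((le_sup_left : sigOf Z' ≤ sigOf Z' ⊔ sigOf Z) _ hk')).mul
      (stronglyMeasurable_condExp.mono le_sup_left)).mul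
      (sm_ind ((le_sup_right : sigOf Z ≤ sigOf Z' ⊔ sigOf Z) _ hk))
  have zeta2b : ∀ᵐ ω ∂P, ‖ind k' ω * (P[ind h|sigOf Z']) ω * ind (Z ⁻¹' Γ) ω‖ ≤ 1 := by
    filter_upwards [hφb] with ω h1
    exact norm_mul_le_one (norm_mul_le_one (norm_ind_le_one _ ω) h1) (norm_ind_le_one _ ω)
  have zeta3 : StronglyMeasurable[G' ⊔ sigOf Z']
      (fun ω => ind g ω * ind (Y ⁻¹' Γ) ω * ind k' ω) :=
    (((sm_ind s3).mul (sm_ind s1)).mul (sm_ind s2))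
  have zeta3b : ∀ᵐ ω ∂P, ‖ind g ω * ind (Y ⁻¹' Γ) ω * ind k' ω‖ ≤ 1 :=
    Eventually.of_forall fun ω =>
      norm_mul_le_one (norm_mul_le_one (norm_ind_le_one _ ω) (norm_ind_le_one _ ω))
        (norm_ind_le_one _ ω)
  calc ∫ ω in Z ⁻¹' Γ, (P[ind g|sigOf Z]) ω * (P[ind (h ∩ k')|sigOf Z]) ω ∂P
      = ∫ ω, (ind (Z ⁻¹' Γ) ω * (P[ind g|sigOf Z]) ω) * (P[ind (h ∩ k')|sigOf Z]) ω ∂P := by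
        rw [setIntegral_eq_ind hkm]
        refine integral_congr_ae (Eventually.of_forall fun ω => ?_)
        ring
    _ = ∫ ω, (ind (Z ⁻¹' Γ) ω * (P[ind g|sigOf Z]) ω) * ind (h ∩ k') ω ∂P :=
        (integral_mul_condexp hK ((sm_ind hk).mul stronglyMeasurable_condExp) bkρ
          (int_ind hhk'm)).symm
    _ = ∫ ω, (ind (Y ⁻¹' Γ) ω * Fρ (Y ω) * ind k' ω) * ind h ω ∂P := by
        refine integral_congr_ae ?_
        filter_upwards [hkkt, hρρt] with ω h1 h2
        rw [ind_inter_apply, ← h1, ← h2]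
        ring
    _ = ∫ ω, (ind (Y ⁻¹' Γ) ω * Fρ (Y ω) * ind k' ω) * (P[ind h|sigOf Z']) ω ∂P :=
        integral_mul_ind_eq hG' hHW hK' hsm hh zeta1 zeta1b
    _ = ∫ ω, (ind k' ω * (P[ind h|sigOf Z']) ω * ind (Z ⁻¹' Γ) ω) * (P[ind g|sigOf Z]) ω ∂P := by
        refine integral_congr_ae ?_
        filter_upwards [hkkt, hρρt] with ω h1 h2
        rw [← h1, ← h2]
        ring
    _ = ∫ ω, (ind k' ω * (P[ind h|sigOf Z']) ω * ind (Z ⁻¹' Γ) ω) * ind g ω ∂P :=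
        (integral_mul_ind_eq hK' hG hK (cig_symm hih) hg zeta2 zeta2b).symm
    _ = ∫ ω, (ind g ω * ind (Y ⁻¹' Γ) ω * ind k' ω) * (P[ind h|sigOf Z']) ω ∂P := by
        refine integral_congr_ae ?_
        filter_upwards [hkkt] with ω h1
        rw [← h1]
        ring
    _ = ∫ ω, (ind g ω * ind (Y ⁻¹' Γ) ω * ind k' ω) * ind h ω ∂P :=
        (integral_mul_ind_eq hG' hHW hK' hsm hh zeta3 zeta3b).symm
    _ = ∫ ω in Z ⁻¹' Γ, ind (g ∩ (h ∩ k')) ω ∂P := by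
        rw [setIntegral_eq_ind hkm]
        refine integral_congr_ae ?_
        filter_upwards [hkkt] with ω h1
        rw [ind_inter_apply, ind_inter_apply, ← h1]
        ring

variable {T : Type*} [TopologicalSpace T]

lemma mem_Au_of_mem {𝒜 : Set (Set T)} {A : Set T} (hA : A ∈ 𝒜) : A ∈ Au 𝒜 :=
  ⟨{A}, by simpa using hA, Finset.singleton_nonempty A, by simp⟩

lemma union_sUnion_mem_Au {𝒜 : Set (Set T)} {B : Set T} (hB : B ∈ Au 𝒜)
    (s : Finset (Set T)) (hs : ↑s ⊆ 𝒜) : B ∪ ⋃₀ ↑s ∈ Au 𝒜 := by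
  classical
  obtain ⟨sB, h1, h2, rfl⟩ := hB
  refine ⟨sB ∪ s, ?_, ?_, ?_⟩
  · rw [Finset.coe_union]; exact Set.union_subset h1 hs
  · obtain ⟨x, hx⟩ := h2; exact ⟨x, Finset.mem_union_left _ hx⟩
  · rw [Finset.coe_union, Set.sUnion_union]

lemma union_mem_Au {𝒜 : Set (Set T)} {B C : Set T} (hB : B ∈ Au 𝒜) (hC : C ∈ Au 𝒜) :
    B ∪ C ∈ Au 𝒜 := by
  obtain ⟨t, ht, htne, rfl⟩ := hC
  exact union_sUnion_mem_Au hB t ht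

lemma sigOf_le_filt {𝒜 : Set (Set T)} {X : Set T → Ω → ℝ} {A B : Set T}
    (hA : A ∈ 𝒜) (hAB : A ⊆ B) : sigOf (X A) ≤ filt 𝒜 X B :=
  le_iSup₂ (f := fun (A : Set T) (_ : A ∈ {A | A ∈ 𝒜 ∧ A ⊆ B}) => sigOf (X A)) A ⟨hA, hAB⟩

lemma filt_mono {𝒜 : Set (Set T)} {X : Set T → Ω → ℝ} {B B' : Set T} (h : B ⊆ B') :
    filt 𝒜 X B ≤ filt 𝒜 X B' :=
  iSup₂_le fun A hA => sigOf_le_filt hA.1 (hA.2.trans h)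

lemma filt_le {𝒜 : Set (Set T)} {X : Set T → Ω → ℝ} (hmeas : MeasOnAu 𝒜 X) (B : Set T) :
    filt 𝒜 X B ≤ mΩ :=
  iSup₂_le fun A hA => (hmeas A (mem_Au_of_mem hA.1)).comap_le

lemma sm_of_sigOf_le {f : Ω → ℝ} {m : MeasurableSpace Ω} (h : sigOf f ≤ m) :
    StronglyMeasurable[m] f :=
  Measurable.stronglyMeasurable fun s hs => h _ ⟨s, hs, rfl⟩

lemma exists_rep_aux {𝒜 : Set (Set T)} (h𝒜 : IsIndexing 𝒜) {X : Set T → Ω → ℝ}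
    (hadd : AddExtension 𝒜 P X) :
    ∀ n (s : Finset (Set T)), s.card ≤ n → ↑s ⊆ 𝒜 → s.Nonempty →
      ∃ Y : Ω → ℝ, StronglyMeasurable[filt 𝒜 X (⋃₀ ↑s)] Y ∧ X (⋃₀ ↑s) =ᵐ[P] Y := by
  classical
  intro n
  induction n with
  | zero =>
    intro s hcard _ hne
    rw [Nat.le_zero, Finset.card_eq_zero] at hcard
    subst hcard
    exact absurd hne (by simp)
  | succ n ih =>
    intro s hcard hsub hne
    obtain ⟨A, hA⟩ := hne
    have hAmem : A ∈ 𝒜 := hsub (Finset.mem_coe.mpr hA)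
    set t := s.erase A with htdef
    have hins : insert A t = s := Finset.insert_erase hA
    by_cases htne : t.Nonempty
    · have htsub : ↑t ⊆ 𝒜 := fun x hx =>
        hsub (Finset.mem_coe.mpr (Finset.mem_of_mem_erase (Finset.mem_coe.mp hx)))
      have hcardt : t.card ≤ n := by
        have h1 : t.card < s.card := Finset.card_erase_lt_of_mem hA
        omega
      obtain ⟨Y₁, hY₁m, hY₁⟩ := ih t hcardt htsub htne
      set u := t.image (fun A' => A ∩ A') with hudef
      have husub : ↑u ⊆ 𝒜 := by
        intro x hx
        rw [hudef, Finset.coe_image] at hx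
        obtain ⟨A', hA', rfl⟩ := hx
        have hA'mem : A' ∈ 𝒜 := htsub hA'
        show A ∩ A' ∈ 𝒜
        have he : A ∩ A' = ⋂₀ {A, A'} := (Set.sInter_pair A A').symm
        rw [he]
        refine h𝒜.sInter_mem {A, A'} ?_ ⟨A, Set.mem_insert _ _⟩
        exact Set.insert_subset_iff.mpr ⟨hAmem, Set.singleton_subset_iff.mpr hA'mem⟩
      have hucard : u.card ≤ n := le_trans Finset.card_image_le hcardt
      have hune : u.Nonempty := htne.image _
      obtain ⟨Y₂, hY₂m, hY₂⟩ := ih u hucard husub hune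
      have hAu : A ∈ Au 𝒜 := mem_Au_of_mem hAmem
      have hBt : (⋃₀ ↑t : Set T) ∈ Au 𝒜 := ⟨t, htsub, htne, rfl⟩
      have hmod := hadd.2 A hAu (⋃₀ ↑t) hBt
      have hint : A ∩ ⋃₀ ↑t = ⋃₀ ↑u := by
        rw [hudef, Finset.coe_image, Set.sUnion_image]
        ext x
        simp only [Set.mem_inter_iff, Set.mem_sUnion, Set.mem_iUnion, Finset.mem_coe,
          exists_prop]
        constructor
        · rintro ⟨hxA, v, hv, hxv⟩
          exact ⟨v, hv, hxA, hxv⟩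
        · rintro ⟨v, hv, hxA, hxv⟩
          exact ⟨hxA, v, hv, hxv⟩
      have hset : (⋃₀ ↑s : Set T) = A ∪ ⋃₀ ↑t := by
        rw [← hins, Finset.coe_insert, Set.sUnion_insert]
      rw [hset]
      refine ⟨fun ω => X A ω + Y₁ ω - Y₂ ω, ?_, ?_⟩
      · have m1 : StronglyMeasurable[filt 𝒜 X (A ∪ ⋃₀ ↑t)] (X A) :=
          sm_of_sigOf_le (sigOf_le_filt hAmem Set.subset_union_left)
        have m2 : StronglyMeasurable[filt 𝒜 X (A ∪ ⋃₀ ↑t)] Y₁ :=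
          hY₁m.mono (filt_mono Set.subset_union_right)
        have hle2 : filt 𝒜 X (⋃₀ ↑u) ≤ filt 𝒜 X (A ∪ ⋃₀ ↑t) := by
          rw [← hint]
          exact filt_mono (Set.inter_subset_left.trans Set.subset_union_left)
        have m3 : StronglyMeasurable[filt 𝒜 X (A ∪ ⋃₀ ↑t)] Y₂ := hY₂m.mono hle2
        exact (m1.add m2).sub m3
      · have hXu : X (A ∩ ⋃₀ ↑t) = X (⋃₀ ↑u) := by rw [hint]
        filter_upwards [hmod, hY₁, hY₂] with ω e1 e2 e3
        rw [hXu] at e1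
        have e3' : X (⋃₀ ↑u) ω = Y₂ ω := e3
        linarith
    · have hts : s = {A} := by
        rw [Finset.not_nonempty_iff_eq_empty] at htne
        rw [← hins, htne]
        rfl
      have hset : (⋃₀ ↑s : Set T) = A := by rw [hts]; simp
      rw [hset]
      exact ⟨X A, sm_of_sigOf_le (sigOf_le_filt hAmem (subset_refl A)),
        Filter.EventuallyEq.rfl⟩

lemma exists_rep {𝒜 : Set (Set T)} (h𝒜 : IsIndexing 𝒜) {X : Set T → Ω → ℝ}
    (hadd : AddExtension 𝒜 P X) {B : Set T} (hB : B ∈ Au 𝒜) :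
    ∃ Y : Ω → ℝ, StronglyMeasurable[filt 𝒜 X B] Y ∧ X B =ᵐ[P] Y := by
  obtain ⟨s, hsub, hne, rfl⟩ := hB
  exact exists_rep_aux h𝒜 hadd s.card s le_rfl hsub hne

end Prop1Aux

end Proposition1Aux


/-- Proposition 1: `X` is set-Markov iff for all `B ⊆ B'` in `𝒜(u)`,
`ℱ_B ⟂ σ(X_{B'}) | σ(X_B)`. -/
theorem statement3 {T : Type*} [TopologicalSpace T] [CompactSpace T] [T2Space T]
    {Ω : Type*} [mΩ : MeasurableSpace Ω] (P : Measure Ω) [IsProbabilityMeasure P]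
    (𝒜 : Set (Set T)) (h𝒜 : IsIndexing 𝒜)
    (X : Set T → Ω → ℝ) (hmeas : MeasOnAu 𝒜 X) (hadd : AddExtension 𝒜 P X) :
    SetMarkov 𝒜 P X ↔
      ∀ B ∈ Au 𝒜, ∀ B' ∈ Au 𝒜, B ⊆ B' →
        CondIndepGiven P (filt 𝒜 X B) (sigOf (X B')) (sigOf (X B)) := by
  classical
  constructor
  · intro hSM B hB B' hB' hsub
    have hG : filt 𝒜 X B ≤ mΩ := Prop1Aux.filt_le hmeas B
    have hK : sigOf (X B) ≤ mΩ := (hmeas B hB).comap_le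
    obtain ⟨s, hs𝒜, hsne, rfl⟩ := hB'
    have key : ∀ s' : Finset (Set T), ↑s' ⊆ 𝒜 →
        CondIndepGiven P (filt 𝒜 X B) (sigOf (X (B ∪ ⋃₀ ↑s'))) (sigOf (X B)) := by
      intro s'
      induction s' using Finset.induction_on with
      | empty =>
        intro _
        have h0 : (B ∪ ⋃₀ ↑(∅ : Finset (Set T)) : Set T) = B := by simp
        rw [h0]
        exact Prop1Aux.cig_self hG hK
      | @insert a s' ha ih =>
        intro hins
        have has : a ∈ 𝒜 := hins (by rw [Finset.coe_insert]; exact Set.mem_insert _ _)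
        have hs'sub : ↑s' ⊆ 𝒜 := fun x hx =>
          hins (by rw [Finset.coe_insert]; exact Set.mem_insert_iff.mpr (Or.inr hx))
        have ihh := ih hs'sub
        have hU : (B ∪ ⋃₀ ↑s' : Set T) ∈ Au 𝒜 := Prop1Aux.union_sUnion_mem_Au hB s' hs'sub
        have hsm := hSM a has (B ∪ ⋃₀ ↑s') hU
        have haU : (a ∪ (B ∪ ⋃₀ ↑s') : Set T) ∈ Au 𝒜 :=
          Prop1Aux.union_mem_Au (Prop1Aux.mem_Au_of_mem has) hU
        have hW : Measurable (fun ω => X (a ∪ (B ∪ ⋃₀ ↑s')) ω - X (B ∪ ⋃₀ ↑s') ω) :=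
          (hmeas _ haU).sub (hmeas _ hU)
        have hchain := Prop1Aux.cig_chain (P := P) (Prop1Aux.filt_le hmeas (B ∪ ⋃₀ ↑s'))
          (Prop1Aux.filt_mono Set.subset_union_left) (hmeas B hB) (hmeas _ hU) hW
          (Prop1Aux.exists_rep h𝒜 hadd hB) hsm ihh
        have h3 : X (a ∪ (B ∪ ⋃₀ ↑s')) = fun ω =>
            (X (a ∪ (B ∪ ⋃₀ ↑s')) ω - X (B ∪ ⋃₀ ↑s') ω) + X (B ∪ ⋃₀ ↑s') ω := by
          funext ω; ring
        have h4 : Measurable[sigOf (fun ω => X (a ∪ (B ∪ ⋃₀ ↑s')) ω - X (B ∪ ⋃₀ ↑s') ω)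
            ⊔ sigOf (X (B ∪ ⋃₀ ↑s'))] (X (a ∪ (B ∪ ⋃₀ ↑s'))) := by
          have w1 : Measurable[sigOf (fun ω => X (a ∪ (B ∪ ⋃₀ ↑s')) ω - X (B ∪ ⋃₀ ↑s') ω)
              ⊔ sigOf (X (B ∪ ⋃₀ ↑s'))] (fun ω => X (a ∪ (B ∪ ⋃₀ ↑s')) ω - X (B ∪ ⋃₀ ↑s') ω) :=
            Measurable.of_comap_le le_sup_left
          have w2 : Measurable[sigOf (fun ω => X (a ∪ (B ∪ ⋃₀ ↑s')) ω - X (B ∪ ⋃₀ ↑s') ω)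
              ⊔ sigOf (X (B ∪ ⋃₀ ↑s'))] (X (B ∪ ⋃₀ ↑s')) :=
            Measurable.of_comap_le le_sup_right
          convert w1.add w2 using 1
          exact h3
        have hmono := Prop1Aux.cig_mono h4.comap_le hchain
        have hseteq : (B ∪ ⋃₀ ↑(insert a s') : Set T) = a ∪ (B ∪ ⋃₀ ↑s') := by
          rw [Finset.coe_insert, Set.sUnion_insert]
          exact Set.union_left_comm B a (⋃₀ ↑s')
        rw [hseteq]
        exact hmono
    have h1 := key s hs𝒜
    have h2 : (B ∪ ⋃₀ ↑s : Set T) = ⋃₀ ↑s := Set.union_eq_self_of_subset_left hsub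
    rwa [h2] at h1
  · intro hR A hA B hB
    have hG : filt 𝒜 X B ≤ mΩ := Prop1Aux.filt_le hmeas B
    have hK : sigOf (X B) ≤ mΩ := (hmeas B hB).comap_le
    have hAB : (A ∪ B : Set T) ∈ Au 𝒜 :=
      Prop1Aux.union_mem_Au (Prop1Aux.mem_Au_of_mem hA) hB
    have hH : sigOf (X (A ∪ B)) ≤ mΩ := (hmeas _ hAB).comap_le
    have h1 := hR B hB (A ∪ B) hAB Set.subset_union_right
    have h2 := Prop1Aux.cig_sup hG hH hK h1
    refine Prop1Aux.cig_mono ?_ h2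
    have m1 : Measurable[sigOf (X (A ∪ B)) ⊔ sigOf (X B)] (X (A ∪ B)) :=
      Measurable.of_comap_le le_sup_left
    have m2 : Measurable[sigOf (X (A ∪ B)) ⊔ sigOf (X B)] (X B) :=
      Measurable.of_comap_le le_sup_right
    exact (m1.sub m2).comap_le

end SetIndexedMarkov
end
end

section
/- The set-indexed process X (having an almost surely unique additive extension to 𝒞(u)) is set-Markov if and only if for all B, B' ∈ 𝒜(u) with B ⊆ B', the σ-fields ℱ_B and σ(X_{B'∖B}) are conditionally independent given σ(X_B), where X_{B'∖B} := X_{B'} − X_B. -/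
set_option linter.unusedSectionVars false
set_option linter.unusedVariables false


open MeasureTheory ProbabilityTheory Set
open scoped ENNReal

noncomputable section

namespace SetIndexedMarkov

variable {T : Type*} [TopologicalSpace T] {Ω : Type*} [mΩ : MeasurableSpace Ω]

section BasicT
variable {𝒜 : Set (Set T)} {X : Set T → Ω → ℝ} {A B B' : Set T}

lemma measurable_sigOf (f : Ω → ℝ) : Measurable[sigOf f] f :=
  Measurable.of_comap_le le_rfl

lemma sigOf_le {f : Ω → ℝ} (hf : Measurable f) : sigOf f ≤ mΩ :=
  measurable_iff_comap_le.mp hf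

lemma mem_Au_of_mem (hA : A ∈ 𝒜) : A ∈ Au 𝒜 :=
  ⟨{A}, by simpa using hA, ⟨A, Finset.mem_singleton_self A⟩, by simp⟩

lemma union_mem_Au (hA : A ∈ 𝒜) (hB : B ∈ Au 𝒜) : A ∪ B ∈ Au 𝒜 := by
  classical
  obtain ⟨s, hs, hsne, rfl⟩ := hB
  refine ⟨insert A s, ?_, ⟨A, Finset.mem_insert_self A s⟩, ?_⟩
  · rw [Finset.coe_insert]; exact Set.insert_subset hA hs
  · rw [Finset.coe_insert, Set.sUnion_insert]

lemma le_filt (hA : A ∈ 𝒜) (hAB : A ⊆ B) : sigOf (X A) ≤ filt 𝒜 X B :=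
  le_iSup₂ (f := fun A (_ : A ∈ {A | A ∈ 𝒜 ∧ A ⊆ B}) => sigOf (X A)) A ⟨hA, hAB⟩

lemma filt_mono (h : B ⊆ B') : filt 𝒜 X B ≤ filt 𝒜 X B' :=
  biSup_mono fun A hA => ⟨hA.1, hA.2.trans h⟩

lemma filt_le (hmeas : ∀ A ∈ 𝒜, Measurable (X A)) : filt 𝒜 X B ≤ mΩ :=
  iSup₂_le fun A hA => sigOf_le (hmeas A hA.1)

end BasicT

section AeSet
variable {α : Type*} {mα : MeasurableSpace α} {μ : Measure α}

/-- a.e. equality of sets, stated so that it is robust to extra `MeasurableSpace`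
hypotheses in the context. -/
def AeEqSet {α : Type*} {mα : MeasurableSpace α} (μ : Measure α) (S S' : Set α) : Prop :=
  S =ᵐ[μ] S'

lemma AeEqSet.refl (S : Set α) : AeEqSet μ S S := Filter.EventuallyEq.rfl

lemma AeEqSet.compl {S S' : Set α} (h : AeEqSet μ S S') : AeEqSet μ Sᶜ S'ᶜ :=
  Filter.EventuallyEq.compl h

lemma AeEqSet.iUnion {f g : ℕ → Set α} (h : ∀ n, AeEqSet μ (f n) (g n)) :
    AeEqSet μ (⋃ n, f n) (⋃ n, g n) := by
  have hh : ∀ᵐ ω ∂μ, ∀ n, f n ω = g n ω := ae_all_iff.mpr h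
  filter_upwards [hh] with ω hω
  show (ω ∈ ⋃ n, f n) = (ω ∈ ⋃ n, g n)
  simp only [Set.mem_iUnion]
  exact eq_iff_iff.mpr ⟨fun ⟨n, hn⟩ => ⟨n, (iff_of_eq (hω n)).mp hn⟩,
    fun ⟨n, hn⟩ => ⟨n, (iff_of_eq (hω n)).mpr hn⟩⟩

lemma AeEqSet.preimage {f g : α → ℝ} (hfg : f =ᵐ[μ] g) (Γ : Set ℝ) :
    AeEqSet μ (f ⁻¹' Γ) (g ⁻¹' Γ) := by
  filter_upwards [hfg] with ω hω
  show (f ω ∈ Γ) = (g ω ∈ Γ)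
  rw [hω]

lemma AeEqSet.setIntegral {S S' : Set α} (h : AeEqSet μ S S') (f : α → ℝ) :
    ∫ ω in S, f ω ∂μ = ∫ ω in S', f ω ∂μ :=
  setIntegral_congr_set h

/-- The σ-algebra of sets a.e. equal to an `m`-measurable set. -/
def aeClose {α : Type*} {mα : MeasurableSpace α} (μ : Measure α) (m : MeasurableSpace α) :
    MeasurableSpace α where
  MeasurableSet' S := ∃ S', MeasurableSet[m] S' ∧ AeEqSet μ S S'
  measurableSet_empty := ⟨∅, m.measurableSet_empty, AeEqSet.refl _⟩
  measurableSet_compl := fun _ ⟨S', hS', hae⟩ => ⟨S'ᶜ, m.measurableSet_compl _ hS', hae.compl⟩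
  measurableSet_iUnion := fun f hf => by
    choose g hg hae using hf
    exact ⟨⋃ n, g n, m.measurableSet_iUnion _ hg, AeEqSet.iUnion hae⟩

lemma le_aeClose {m : MeasurableSpace α} : m ≤ aeClose μ m :=
  fun S hS => ⟨S, hS, AeEqSet.refl _⟩

lemma aeClose_mono {m m' : MeasurableSpace α} (h : m ≤ m') :
    aeClose μ m ≤ aeClose μ m' := fun S ⟨S', hS', hae⟩ => ⟨S', h S' hS', hae⟩

lemma sigOf_le_aeClose {m : MeasurableSpace α} {f g : α → ℝ}
    (hfg : f =ᵐ[μ] g) (hg : Measurable[m] g) : sigOf f ≤ aeClose μ m := by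
  rintro S ⟨Γ, hΓ, rfl⟩
  exact ⟨g ⁻¹' Γ, hg hΓ, AeEqSet.preimage hfg Γ⟩

end AeSet

section Generic
variable {α : Type*} {m m' mF mF₁ mG mH mH' mK mK₁ : MeasurableSpace α}
  [mα : MeasurableSpace α] {μ : Measure α} [IsFiniteMeasure μ]

lemma integrable_ind {h : Set α} (hh : MeasurableSet[mα] h) :
    Integrable (h.indicator fun _ => (1 : ℝ)) μ :=
  (integrable_const 1).indicator hh

lemma integrable_of_ae_bdd {f : α → ℝ} (hf : AEStronglyMeasurable f μ) (C : ℝ)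
    (h : ∀ᵐ ω ∂μ, ‖f ω‖ ≤ C) : Integrable f μ :=
  Integrable.mono' (integrable_const C) hf h

/-- Dynkin argument: two integrable functions with equal integrals on a generating
π-system (and globally) have equal integrals on every `m`-measurable set. -/
lemma setIntegral_ext_of_generateFrom (hm : m ≤ mα)
    {p : Set (Set α)} (hgen : m = MeasurableSpace.generateFrom p) (hpi : IsPiSystem p)
    {f₁ f₂ : α → ℝ} (hf₁ : Integrable f₁ μ) (hf₂ : Integrable f₂ μ)
    (huniv : ∫ ω, f₁ ω ∂μ = ∫ ω, f₂ ω ∂μ)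
    (hbase : ∀ S ∈ p, ∫ ω in S, f₁ ω ∂μ = ∫ ω in S, f₂ ω ∂μ) :
    ∀ S, MeasurableSet[m] S → ∫ ω in S, f₁ ω ∂μ = ∫ ω in S, f₂ ω ∂μ := by
  intro S hS
  refine MeasurableSpace.induction_on_inter (m := m) hgen hpi ?_ hbase ?_ ?_ S hS
  · simp
  · intro t htm ht
    have htm' : MeasurableSet[mα] t := hm t htm
    have e1 := setIntegral_compl htm' hf₁
    have e2 := setIntegral_compl htm' hf₂
    rw [e1, e2, ht, huniv]
  · intro f hdisj hfm hfi
    have hfm' : ∀ i, MeasurableSet[mα] (f i) := fun i => hm _ (hfm i)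
    have e1 := integral_iUnion hfm' hdisj (hf₁.integrableOn (s := ⋃ i, f i))
    have e2 := integral_iUnion hfm' hdisj (hf₂.integrableOn (s := ⋃ i, f i))
    rw [e1, e2]
    exact tsum_congr hfi

lemma ind_nonneg (S : Set α) : (0 : α → ℝ) ≤ S.indicator fun _ => (1 : ℝ) := fun ω =>
  Set.indicator_nonneg (fun _ _ => zero_le_one) ω

lemma ind_le_one (S : Set α) : (S.indicator fun _ => (1 : ℝ)) ≤ fun _ => (1 : ℝ) := by
  intro ω; by_cases h : ω ∈ S <;> simp [Set.indicator, h]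

lemma ind_norm_le_one (S : Set α) (ω : α) : ‖S.indicator (fun _ => (1 : ℝ)) ω‖ ≤ 1 := by
  by_cases h : ω ∈ S <;> simp [Set.indicator, h]

lemma condexp_ind_nonneg (S : Set α) :
    0 ≤ᵐ[μ] μ[S.indicator fun _ => (1 : ℝ)|m] :=
  condExp_nonneg (Filter.Eventually.of_forall (ind_nonneg S))

lemma condexp_ind_le_one (hm : m ≤ mα) {S : Set α} (hS : MeasurableSet[mα] S) :
    μ[S.indicator fun _ => (1 : ℝ)|m] ≤ᵐ[μ] fun _ => (1 : ℝ) := by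
  have h := condExp_mono (μ := μ) (m := m) (integrable_ind hS) (integrable_const (1 : ℝ))
    (Filter.Eventually.of_forall (ind_le_one S))
  have hc := condExp_const (μ := μ) hm (1 : ℝ)
  exact h.trans (Filter.Eventually.of_forall fun ω => le_of_eq (congrFun hc ω))

lemma condexp_ind_norm_le (hm : m ≤ mα) {S : Set α} (hS : MeasurableSet[mα] S) :
    ∀ᵐ ω ∂μ, ‖(μ[S.indicator fun _ => (1 : ℝ)|m]) ω‖ ≤ 1 := by
  filter_upwards [condexp_ind_nonneg (μ := μ) (m := m) S, condexp_ind_le_one hm hS]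
    with ω h0 h1
  simp only [Pi.zero_apply] at h0
  rw [Real.norm_eq_abs, abs_le]
  exact ⟨by linarith, h1⟩

lemma abs_setIntegral_sub_le {S : Set α} {f g : α → ℝ}
    (hf : Integrable f μ) (hg : Integrable g μ) :
    |∫ ω in S, f ω ∂μ - ∫ ω in S, g ω ∂μ| ≤ ∫ ω, |f ω - g ω| ∂μ := by
  rw [← integral_sub hf.integrableOn hg.integrableOn]
  calc |∫ ω in S, (f ω - g ω) ∂μ| ≤ ∫ ω in S, |f ω - g ω| ∂μ := by
        simpa [Real.norm_eq_abs] using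
          norm_integral_le_integral_norm (μ := μ.restrict S) (fun ω => f ω - g ω)
    _ ≤ ∫ ω, |f ω - g ω| ∂μ :=
        setIntegral_le_integral (hf.sub hg).abs
          (Filter.Eventually.of_forall fun ω => abs_nonneg _)

/-- π-system of intersections generating the sup of two σ-algebras. -/
def piPairs (m₁ m₂ : MeasurableSpace α) : Set (Set α) :=
  {S | ∃ s t, MeasurableSet[m₁] s ∧ MeasurableSet[m₂] t ∧ S = s ∩ t}

lemma isPiSystem_piPairs {m₁ m₂ : MeasurableSpace α} : IsPiSystem (piPairs m₁ m₂) := by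
  rintro S ⟨s, t, hs, ht, rfl⟩ S' ⟨s', t', hs', ht', rfl⟩ -
  refine ⟨s ∩ s', t ∩ t', MeasurableSet.inter hs hs', MeasurableSet.inter ht ht', ?_⟩
  ext ω; simp only [Set.mem_inter_iff]; tauto

lemma univ_mem_piPairs {m₁ m₂ : MeasurableSpace α} : Set.univ ∈ piPairs m₁ m₂ :=
  ⟨Set.univ, Set.univ, MeasurableSet.univ, MeasurableSet.univ, (Set.univ_inter _).symm⟩

lemma sup_eq_generateFrom_piPairs (m₁ m₂ : MeasurableSpace α) :
    m₁ ⊔ m₂ = MeasurableSpace.generateFrom (piPairs m₁ m₂) := by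
  refine le_antisymm (sup_le ?_ ?_) (MeasurableSpace.generateFrom_le ?_)
  · intro s hs
    exact MeasurableSpace.measurableSet_generateFrom
      ⟨s, Set.univ, hs, MeasurableSet.univ, (Set.inter_univ _).symm⟩
  · intro t ht
    exact MeasurableSpace.measurableSet_generateFrom
      ⟨Set.univ, t, MeasurableSet.univ, ht, (Set.univ_inter _).symm⟩
  · rintro S ⟨s, t, hs, ht, rfl⟩
    exact MeasurableSet.inter ((le_sup_left : m₁ ≤ m₁ ⊔ m₂) s hs)
      ((le_sup_right : m₂ ≤ m₁ ⊔ m₂) t ht)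

/-- Uniqueness wrapper for conditional expectations. -/
lemma ae_condexp_eq_of_forall_setIntegral (hm : m ≤ mα)
    {f φ : α → ℝ} (hf : Integrable f μ) (hφ : Integrable φ μ)
    (hφm : AEStronglyMeasurable[m] φ μ)
    (heq : ∀ S, MeasurableSet[m] S → ∫ ω in S, φ ω ∂μ = ∫ ω in S, f ω ∂μ) :
    φ =ᵐ[μ] μ[f|m] :=
  ae_eq_condExp_of_forall_setIntegral_eq hm hf (fun _ _ _ => hφ.integrableOn)
    (fun s hs _ => heq s hs) hφm

end Generic

section Generic2
variable {α : Type*} {m m' mF mF₁ mG mH mH' mK mK₁ : MeasurableSpace α}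
  [mα : MeasurableSpace α] {μ : Measure α} [IsFiniteMeasure μ]

lemma squeeze_tendsto {a : ℕ → ℝ} {L : ℝ} {c : ℕ → ℝ}
    (hb : ∀ n, |a n - L| ≤ c n) (hc : Filter.Tendsto c Filter.atTop (nhds 0)) :
    Filter.Tendsto a Filter.atTop (nhds L) := by
  rw [tendsto_iff_dist_tendsto_zero]
  exact squeeze_zero (fun n => dist_nonneg) (fun n => by rw [Real.dist_eq]; exact hb n) hc

lemma ind_union_eq_add {h₁ h₂ : Set α} (hd : Disjoint h₁ h₂) :
    ((h₁ ∪ h₂).indicator fun _ => (1 : ℝ))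
      = (h₁.indicator fun _ => (1 : ℝ)) + h₂.indicator fun _ => (1 : ℝ) :=
  Set.indicator_union_of_disjoint hd _

/-- Closure of the identity `∫_S 1_h = ∫_S E[1_h|mK]` under disjoint unions. -/
lemma goodC_union (hK : mK ≤ mα) {S : Set α} {h₁ h₂ : Set α}
    (hm₁ : MeasurableSet[mα] h₁) (hm₂ : MeasurableSet[mα] h₂) (hd : Disjoint h₁ h₂)
    (hc₁ : ∫ ω in S, (h₁.indicator fun _ => (1 : ℝ)) ω ∂μ
        = ∫ ω in S, (μ[h₁.indicator fun _ => (1 : ℝ)|mK]) ω ∂μ)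
    (hc₂ : ∫ ω in S, (h₂.indicator fun _ => (1 : ℝ)) ω ∂μ
        = ∫ ω in S, (μ[h₂.indicator fun _ => (1 : ℝ)|mK]) ω ∂μ) :
    ∫ ω in S, ((h₁ ∪ h₂).indicator fun _ => (1 : ℝ)) ω ∂μ
        = ∫ ω in S, (μ[(h₁ ∪ h₂).indicator fun _ => (1 : ℝ)|mK]) ω ∂μ := by
  have hadd := ind_union_eq_add (α := α) hd
  have hint₁ : Integrable (h₁.indicator fun _ => (1 : ℝ)) μ := integrable_ind hm₁
  have hint₂ : Integrable (h₂.indicator fun _ => (1 : ℝ)) μ := integrable_ind hm₂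
  have hcond : μ[(h₁ ∪ h₂).indicator fun _ => (1 : ℝ)|mK] =ᵐ[μ]
      μ[h₁.indicator fun _ => (1 : ℝ)|mK] + μ[h₂.indicator fun _ => (1 : ℝ)|mK] := by
    rw [hadd]; exact condExp_add hint₁ hint₂ mK
  calc ∫ ω in S, ((h₁ ∪ h₂).indicator fun _ => (1 : ℝ)) ω ∂μ
      = ∫ ω in S, ((h₁.indicator fun _ => (1 : ℝ)) ω + (h₂.indicator fun _ => (1 : ℝ)) ω) ∂μ := by
        rw [hadd]; rfl
    _ = (∫ ω in S, (h₁.indicator fun _ => (1 : ℝ)) ω ∂μ)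
        + ∫ ω in S, (h₂.indicator fun _ => (1 : ℝ)) ω ∂μ :=
        integral_add hint₁.integrableOn hint₂.integrableOn
    _ = (∫ ω in S, (μ[h₁.indicator fun _ => (1 : ℝ)|mK]) ω ∂μ)
        + ∫ ω in S, (μ[h₂.indicator fun _ => (1 : ℝ)|mK]) ω ∂μ := by rw [hc₁, hc₂]
    _ = ∫ ω in S, ((μ[h₁.indicator fun _ => (1 : ℝ)|mK]) ω
        + (μ[h₂.indicator fun _ => (1 : ℝ)|mK]) ω) ∂μ :=
        (integral_add integrable_condExp.integrableOn integrable_condExp.integrableOn).symm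
    _ = ∫ ω in S, (μ[(h₁ ∪ h₂).indicator fun _ => (1 : ℝ)|mK]) ω ∂μ :=
        integral_congr_ae (ae_restrict_of_ae hcond.symm)
  
/-- Dynkin argument in `h` for the identity `∫_S 1_h = ∫_S E[1_h|mK]`. -/
lemma setIntegral_ind_condexp_ext (hK : mK ≤ mα) (hH : mH ≤ mα)
    {p : Set (Set α)} (hgen : mH = MeasurableSpace.generateFrom p) (hpi : IsPiSystem p)
    {S : Set α}
    (hbase : ∀ h ∈ p, ∫ ω in S, (h.indicator fun _ => (1 : ℝ)) ω ∂μ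
        = ∫ ω in S, (μ[h.indicator fun _ => (1 : ℝ)|mK]) ω ∂μ) :
    ∀ h, MeasurableSet[mH] h → ∫ ω in S, (h.indicator fun _ => (1 : ℝ)) ω ∂μ
        = ∫ ω in S, (μ[h.indicator fun _ => (1 : ℝ)|mK]) ω ∂μ := by
  have hempty : ∫ ω in S, ((∅ : Set α).indicator fun _ => (1 : ℝ)) ω ∂μ
      = ∫ ω in S, (μ[(∅ : Set α).indicator fun _ => (1 : ℝ)|mK]) ω ∂μ := by
    have hz : ((∅ : Set α).indicator fun _ => (1 : ℝ)) = (0 : α → ℝ) := by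
      funext ω; simp
    rw [hz, condExp_zero]
  have huniv : ∫ ω in S, ((Set.univ : Set α).indicator fun _ => (1 : ℝ)) ω ∂μ
      = ∫ ω in S, (μ[(Set.univ : Set α).indicator fun _ => (1 : ℝ)|mK]) ω ∂μ := by
    simp only [Set.indicator_univ]
    rw [condExp_const hK]
  intro h hh
  refine MeasurableSpace.induction_on_inter (m := mH) hgen hpi hempty hbase ?_ ?_ h hh
  · -- complement
    intro t htm hct
    have htα : MeasurableSet[mα] t := hH t htm
    have hid : (tᶜ.indicator fun _ => (1 : ℝ))
        = fun ω => ((Set.univ : Set α).indicator fun _ => (1 : ℝ)) ω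
          - (t.indicator fun _ => (1 : ℝ)) ω := by
      funext ω
      by_cases hω : ω ∈ t <;> simp [Set.indicator, hω]
    have hcond : μ[tᶜ.indicator fun _ => (1 : ℝ)|mK] =ᵐ[μ]
        fun ω => (μ[(Set.univ : Set α).indicator fun _ => (1 : ℝ)|mK]) ω
          - (μ[t.indicator fun _ => (1 : ℝ)|mK]) ω := by
      rw [hid]
      exact condExp_sub (by simpa using (integrable_const (1 : ℝ))) (integrable_ind htα) mK
    calc ∫ ω in S, (tᶜ.indicator fun _ => (1 : ℝ)) ω ∂μ
        = (∫ ω in S, ((Set.univ : Set α).indicator fun _ => (1 : ℝ)) ω ∂μ)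
          - ∫ ω in S, (t.indicator fun _ => (1 : ℝ)) ω ∂μ := by
          rw [hid]
          exact integral_sub (by simpa using (integrable_const (1 : ℝ)).integrableOn)
            (integrable_ind htα).integrableOn
      _ = (∫ ω in S, (μ[(Set.univ : Set α).indicator fun _ => (1 : ℝ)|mK]) ω ∂μ)
          - ∫ ω in S, (μ[t.indicator fun _ => (1 : ℝ)|mK]) ω ∂μ := by rw [huniv, hct]
      _ = ∫ ω in S, ((μ[(Set.univ : Set α).indicator fun _ => (1 : ℝ)|mK]) ω
          - (μ[t.indicator fun _ => (1 : ℝ)|mK]) ω) ∂μ :=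
          (integral_sub integrable_condExp.integrableOn integrable_condExp.integrableOn).symm
      _ = ∫ ω in S, (μ[tᶜ.indicator fun _ => (1 : ℝ)|mK]) ω ∂μ :=
          (integral_congr_ae (ae_restrict_of_ae hcond)).symm
  · -- disjoint countable union
    intro f hdisj hfm hfc
    have hfα : ∀ i, MeasurableSet[mα] (f i) := fun i => hH _ (hfm i)
    set U : Set α := ⋃ i, f i with hU
    set u : ℕ → Set α := fun N => ⋃ i ∈ Finset.range N, f i with hu
    have huα : ∀ N, MeasurableSet[mα] (u N) := fun N =>
      (Finset.range N).measurableSet_biUnion (fun i _ => hfα i)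
    have huU : ∀ N, u N ⊆ U := fun N => Set.iUnion₂_subset fun i _ => Set.subset_iUnion f i
    -- partial unions satisfy the identity
    have hCu : ∀ N, ∫ ω in S, ((u N).indicator fun _ => (1 : ℝ)) ω ∂μ
        = ∫ ω in S, (μ[(u N).indicator fun _ => (1 : ℝ)|mK]) ω ∂μ := by
      intro N
      induction N with
      | zero => simpa [hu] using hempty
      | succ N ih =>
        have hstep : u (N + 1) = u N ∪ f N := by
          simp only [hu, Finset.range_add_one]
          ext ω; simp [Finset.mem_insert, or_comm]
        have hdN : Disjoint (u N) (f N) := by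
          rw [Set.disjoint_left]
          rintro ω hωu hωf
          obtain ⟨i, hi, hωi⟩ := Set.mem_iUnion₂.mp hωu
          have hne : i ≠ N := by have := Finset.mem_range.mp hi; omega
          exact (Set.disjoint_left.mp (hdisj hne)) hωi hωf
        rw [hstep]
        exact goodC_union hK (huα N) (hfα N) hdN ih (hfc N)
    -- the error sequence
    have hcn : Filter.Tendsto
        (fun N => ∫ ω, |(U.indicator fun _ => (1 : ℝ)) ω - ((u N).indicator fun _ => (1 : ℝ)) ω| ∂μ)
        Filter.atTop (nhds 0) := by
      have hmeasN : ∀ N : ℕ, AEStronglyMeasurable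
          (fun ω => |(U.indicator fun _ => (1 : ℝ)) ω - ((u N).indicator fun _ => (1 : ℝ)) ω|) μ := by
        intro N
        refine (StronglyMeasurable.aestronglyMeasurable ?_)
        have h1 : StronglyMeasurable[mα] (U.indicator fun _ => (1 : ℝ)) :=
          stronglyMeasurable_const.indicator (MeasurableSet.iUnion hfα)
        have h2 : StronglyMeasurable[mα] ((u N).indicator fun _ => (1 : ℝ)) :=
          stronglyMeasurable_const.indicator (huα N)
        have := (h1.sub h2).norm
        simpa [Real.norm_eq_abs, Pi.sub_apply] using this
      have hbound : ∀ N : ℕ, ∀ᵐ ω ∂μ, ‖|(U.indicator fun _ => (1 : ℝ)) ω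
          - ((u N).indicator fun _ => (1 : ℝ)) ω|‖ ≤ (2 : ℝ) := by
        intro N
        refine Filter.Eventually.of_forall fun ω => ?_
        rw [Real.norm_eq_abs, abs_abs]
        have b1 := ind_norm_le_one U ω
        have b2 := ind_norm_le_one (u N) ω
        rw [Real.norm_eq_abs] at b1 b2
        calc |(U.indicator fun _ => (1:ℝ)) ω - ((u N).indicator fun _ => (1:ℝ)) ω|
            ≤ |(U.indicator fun _ => (1:ℝ)) ω| + |((u N).indicator fun _ => (1:ℝ)) ω| := abs_sub _ _
          _ ≤ 2 := by linarith
      have hlim : ∀ᵐ ω ∂μ, Filter.Tendsto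
          (fun N => |(U.indicator fun _ => (1 : ℝ)) ω - ((u N).indicator fun _ => (1 : ℝ)) ω|)
          Filter.atTop (nhds 0) := by
        refine Filter.Eventually.of_forall fun ω => ?_
        by_cases hω : ω ∈ U
        · obtain ⟨i, hi⟩ := Set.mem_iUnion.mp hω
          have hev : ∀ N ≥ i + 1,
              |(U.indicator fun _ => (1 : ℝ)) ω - ((u N).indicator fun _ => (1 : ℝ)) ω| = 0 := by
            intro N hN
            have hωu : ω ∈ u N := Set.mem_biUnion (Finset.mem_range.mpr (by omega)) hi
            simp [Set.indicator_of_mem hω, Set.indicator_of_mem hωu]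
          refine Filter.Tendsto.congr' ?_ tendsto_const_nhds
          filter_upwards [Filter.eventually_atTop.mpr ⟨i + 1, hev⟩] with N hN
          exact hN.symm
        · have hev : ∀ N, |(U.indicator fun _ => (1 : ℝ)) ω - ((u N).indicator fun _ => (1 : ℝ)) ω| = 0 := by
            intro N
            have hωu : ω ∉ u N := fun hc => hω (huU N hc)
            simp [Set.indicator_of_notMem hω, Set.indicator_of_notMem hωu]
          simpa [hev] using (tendsto_const_nhds : Filter.Tendsto (fun _ : ℕ => (0:ℝ)) _ _)
      have := tendsto_integral_of_dominated_convergence (μ := μ)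
        (F := fun N ω => |(U.indicator fun _ => (1 : ℝ)) ω - ((u N).indicator fun _ => (1 : ℝ)) ω|)
        (f := fun _ => (0 : ℝ)) (bound := fun _ => (2 : ℝ)) hmeasN (integrable_const 2) hbound hlim
      simpa using this
    -- limits
    have hL : Filter.Tendsto (fun N => ∫ ω in S, ((u N).indicator fun _ => (1 : ℝ)) ω ∂μ)
        Filter.atTop (nhds (∫ ω in S, (U.indicator fun _ => (1 : ℝ)) ω ∂μ)) := by
      refine squeeze_tendsto (fun N => ?_) hcn
      have := abs_setIntegral_sub_le (S := S) (μ := μ)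
        (integrable_ind (huα N)) (integrable_ind (MeasurableSet.iUnion hfα))
      calc |(∫ ω in S, ((u N).indicator fun _ => (1 : ℝ)) ω ∂μ)
          - ∫ ω in S, (U.indicator fun _ => (1 : ℝ)) ω ∂μ|
          ≤ ∫ ω, |((u N).indicator fun _ => (1 : ℝ)) ω - (U.indicator fun _ => (1 : ℝ)) ω| ∂μ := this
        _ = ∫ ω, |(U.indicator fun _ => (1 : ℝ)) ω - ((u N).indicator fun _ => (1 : ℝ)) ω| ∂μ := by
            congr 1; funext ω; rw [abs_sub_comm]
    have hR : Filter.Tendsto (fun N => ∫ ω in S, (μ[(u N).indicator fun _ => (1 : ℝ)|mK]) ω ∂μ)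
        Filter.atTop (nhds (∫ ω in S, (μ[U.indicator fun _ => (1 : ℝ)|mK]) ω ∂μ)) := by
      refine squeeze_tendsto (fun N => ?_) hcn
      have h1 : |(∫ ω in S, (μ[(u N).indicator fun _ => (1 : ℝ)|mK]) ω ∂μ)
          - ∫ ω in S, (μ[U.indicator fun _ => (1 : ℝ)|mK]) ω ∂μ|
          ≤ ∫ ω, |(μ[(u N).indicator fun _ => (1 : ℝ)|mK]) ω
            - (μ[U.indicator fun _ => (1 : ℝ)|mK]) ω| ∂μ :=
        abs_setIntegral_sub_le integrable_condExp integrable_condExp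
      have h2 : ∫ ω, |(μ[(u N).indicator fun _ => (1 : ℝ)|mK]) ω
          - (μ[U.indicator fun _ => (1 : ℝ)|mK]) ω| ∂μ
          = ∫ ω, |(μ[((u N).indicator fun _ => (1 : ℝ)) - U.indicator fun _ => (1 : ℝ)|mK]) ω| ∂μ := by
        refine integral_congr_ae ?_
        filter_upwards [condExp_sub (μ := μ) (m := mK) (integrable_ind (huα N))
          (integrable_ind (MeasurableSet.iUnion hfα))] with ω hω
        rw [hω, Pi.sub_apply]
      have h3 := integral_abs_condExp_le (μ := μ) (m := mK)
        ((((u N).indicator fun _ => (1 : ℝ))) - U.indicator fun _ => (1 : ℝ))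
      have h4 : ∫ ω, |((((u N).indicator fun _ => (1 : ℝ))) - U.indicator fun _ => (1 : ℝ)) ω| ∂μ
          = ∫ ω, |(U.indicator fun _ => (1 : ℝ)) ω - ((u N).indicator fun _ => (1 : ℝ)) ω| ∂μ := by
        congr 1; funext ω; rw [Pi.sub_apply, abs_sub_comm]
      calc |(∫ ω in S, (μ[(u N).indicator fun _ => (1 : ℝ)|mK]) ω ∂μ)
          - ∫ ω in S, (μ[U.indicator fun _ => (1 : ℝ)|mK]) ω ∂μ|
          ≤ ∫ ω, |(μ[(u N).indicator fun _ => (1 : ℝ)|mK]) ω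
            - (μ[U.indicator fun _ => (1 : ℝ)|mK]) ω| ∂μ := h1
        _ = ∫ ω, |(μ[((u N).indicator fun _ => (1 : ℝ)) - U.indicator fun _ => (1 : ℝ)|mK]) ω| ∂μ := h2
        _ ≤ ∫ ω, |((((u N).indicator fun _ => (1 : ℝ))) - U.indicator fun _ => (1 : ℝ)) ω| ∂μ := h3
        _ = ∫ ω, |(U.indicator fun _ => (1 : ℝ)) ω - ((u N).indicator fun _ => (1 : ℝ)) ω| ∂μ := h4
    have hEq : ∀ N, ∫ ω in S, ((u N).indicator fun _ => (1 : ℝ)) ω ∂μ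
        = ∫ ω in S, (μ[(u N).indicator fun _ => (1 : ℝ)|mK]) ω ∂μ := hCu
    exact tendsto_nhds_unique (hL.congr fun N => hEq N) hR

end Generic2


section Generic3
variable {α : Type*} {m m' mF mF₁ mG mH mH' mK mK₁ : MeasurableSpace α}
  [mα : MeasurableSpace α] {μ : Measure α} [IsFiniteMeasure μ]

/-- Extension of the identity `∫_S f = ∫_S E[f|mK]` from indicators of `mH`-sets to
bounded `mH`-measurable functions. -/
lemma setIntegral_eq_condexp_of_bounded (hH : mH ≤ mα) (hK : mK ≤ mα) {S : Set α}
    (hbase : ∀ h, MeasurableSet[mH] h → ∫ ω in S, (h.indicator fun _ => (1 : ℝ)) ω ∂μ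
        = ∫ ω in S, (μ[h.indicator fun _ => (1 : ℝ)|mK]) ω ∂μ)
    {ψ : α → ℝ} (hψ : StronglyMeasurable[mH] ψ) (hbdd : ∀ ω, ‖ψ ω‖ ≤ 1) :
    ∫ ω in S, ψ ω ∂μ = ∫ ω in S, (μ[ψ|mK]) ω ∂μ := by
  have hint_simple : ∀ f : @SimpleFunc α mH ℝ, Integrable ⇑f μ := by
    intro f
    obtain ⟨C, hC⟩ := @SimpleFunc.exists_forall_norm_le α ℝ mH _ f
    exact integrable_of_ae_bdd ((f.stronglyMeasurable.mono hH).aestronglyMeasurable) C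
      (Filter.Eventually.of_forall hC)
  have hsimple : ∀ f : @SimpleFunc α mH ℝ,
      ∫ ω in S, f ω ∂μ = ∫ ω in S, (μ[⇑f|mK]) ω ∂μ := by
    intro f
    refine @SimpleFunc.induction α ℝ mH _
      (fun f => ∫ ω in S, f ω ∂μ = ∫ ω in S, (μ[⇑f|mK]) ω ∂μ) ?_ ?_ f
    · intro c s hs
      have hcoe : ⇑(@SimpleFunc.piecewise α ℝ mH s hs (@SimpleFunc.const α ℝ mH c) (@SimpleFunc.const α ℝ mH 0))
          = fun ω => c * (s.indicator fun _ => (1 : ℝ)) ω := by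
        funext ω
        simp only [SimpleFunc.piecewise_apply, SimpleFunc.const_apply]
        by_cases hω : ω ∈ s <;> simp [Set.indicator, hω]
      rw [hcoe]
      have hcond : μ[fun ω => c * (s.indicator fun _ => (1 : ℝ)) ω|mK] =ᵐ[μ]
          fun ω => c * (μ[s.indicator fun _ => (1 : ℝ)|mK]) ω := by
        have hsm := condExp_smul (μ := μ) (m := mK) c (s.indicator fun _ => (1 : ℝ))
        rw [show (fun ω => c * (s.indicator fun _ => (1 : ℝ)) ω) = c • (s.indicator fun _ => (1 : ℝ)) from rfl]
        filter_upwards [hsm] with ω hω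
        simpa [smul_eq_mul] using hω
      calc ∫ ω in S, c * (s.indicator fun _ => (1 : ℝ)) ω ∂μ
          = c * ∫ ω in S, (s.indicator fun _ => (1 : ℝ)) ω ∂μ := integral_const_mul c _
        _ = c * ∫ ω in S, (μ[s.indicator fun _ => (1 : ℝ)|mK]) ω ∂μ := by rw [hbase s hs]
        _ = ∫ ω in S, c * (μ[s.indicator fun _ => (1 : ℝ)|mK]) ω ∂μ := (integral_const_mul c _).symm
        _ = ∫ ω in S, (μ[fun ω => c * (s.indicator fun _ => (1 : ℝ)) ω|mK]) ω ∂μ :=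
            (integral_congr_ae (ae_restrict_of_ae hcond)).symm
    · intro f g hdisj hf hg
      have hca : ⇑(f + g) = ⇑f + ⇑g := rfl
      have hcond : μ[⇑(f + g)|mK] =ᵐ[μ] μ[⇑f|mK] + μ[⇑g|mK] := by
        rw [hca]
        exact condExp_add (hint_simple f) (hint_simple g) mK
      calc ∫ ω in S, (f + g) ω ∂μ
          = ∫ ω in S, (f ω + g ω) ∂μ := rfl
        _ = (∫ ω in S, f ω ∂μ) + ∫ ω in S, g ω ∂μ :=
            integral_add (hint_simple f).integrableOn (hint_simple g).integrableOn
        _ = (∫ ω in S, (μ[⇑f|mK]) ω ∂μ) + ∫ ω in S, (μ[⇑g|mK]) ω ∂μ := by rw [hf, hg]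
        _ = ∫ ω in S, ((μ[⇑f|mK]) ω + (μ[⇑g|mK]) ω) ∂μ :=
            (integral_add integrable_condExp.integrableOn integrable_condExp.integrableOn).symm
        _ = ∫ ω in S, (μ[⇑(f + g)|mK]) ω ∂μ :=
            (integral_congr_ae (ae_restrict_of_ae hcond)).symm
  -- approximation
  set fn : ℕ → @SimpleFunc α mH ℝ := hψ.approxBounded 1 with hfn
  have htend : ∀ ω, Filter.Tendsto (fun n => fn n ω) Filter.atTop (nhds (ψ ω)) := fun ω =>
    hψ.tendsto_approxBounded_of_norm_le (hbdd ω)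
  have hnorm : ∀ n ω, ‖fn n ω‖ ≤ 1 := fun n ω => hψ.norm_approxBounded_le zero_le_one n ω
  have hintψ : Integrable ψ μ :=
    integrable_of_ae_bdd ((hψ.mono hH).aestronglyMeasurable) 1 (Filter.Eventually.of_forall hbdd)
  have hcn : Filter.Tendsto (fun n => ∫ ω, |fn n ω - ψ ω| ∂μ) Filter.atTop (nhds 0) := by
    have hmeasN : ∀ n : ℕ, AEStronglyMeasurable (fun ω => |fn n ω - ψ ω|) μ := by
      intro n
      have h1 : StronglyMeasurable[mα] ⇑(fn n) := (fn n).stronglyMeasurable.mono hH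
      have h2 : StronglyMeasurable[mα] ψ := hψ.mono hH
      have := (h1.sub h2).norm
      exact (by simpa [Real.norm_eq_abs, Pi.sub_apply] using this :
        StronglyMeasurable[mα] fun ω => |fn n ω - ψ ω|).aestronglyMeasurable
    have hbound : ∀ n : ℕ, ∀ᵐ ω ∂μ, ‖|fn n ω - ψ ω|‖ ≤ (2 : ℝ) := by
      intro n
      refine Filter.Eventually.of_forall fun ω => ?_
      rw [Real.norm_eq_abs, abs_abs]
      have b1 := hnorm n ω
      have b2 := hbdd ω
      rw [Real.norm_eq_abs] at b1 b2
      calc |fn n ω - ψ ω| ≤ |fn n ω| + |ψ ω| := abs_sub _ _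
        _ ≤ 2 := by linarith
    have hlim : ∀ᵐ ω ∂μ, Filter.Tendsto (fun n => |fn n ω - ψ ω|) Filter.atTop (nhds 0) := by
      refine Filter.Eventually.of_forall fun ω => ?_
      have := ((htend ω).sub (tendsto_const_nhds (x := ψ ω))).abs
      simpa using this
    have := tendsto_integral_of_dominated_convergence (μ := μ)
      (F := fun n ω => |fn n ω - ψ ω|) (f := fun _ => (0 : ℝ)) (bound := fun _ => (2 : ℝ))
      hmeasN (integrable_const 2) hbound hlim
    simpa using this
  have hL : Filter.Tendsto (fun n => ∫ ω in S, fn n ω ∂μ) Filter.atTop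
      (nhds (∫ ω in S, ψ ω ∂μ)) := by
    refine squeeze_tendsto (fun n => ?_) hcn
    exact abs_setIntegral_sub_le (hint_simple (fn n)) hintψ
  have hR : Filter.Tendsto (fun n => ∫ ω in S, (μ[⇑(fn n)|mK]) ω ∂μ) Filter.atTop
      (nhds (∫ ω in S, (μ[ψ|mK]) ω ∂μ)) := by
    refine squeeze_tendsto (fun n => ?_) hcn
    have h1 : |(∫ ω in S, (μ[⇑(fn n)|mK]) ω ∂μ) - ∫ ω in S, (μ[ψ|mK]) ω ∂μ|
        ≤ ∫ ω, |(μ[⇑(fn n)|mK]) ω - (μ[ψ|mK]) ω| ∂μ :=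
      abs_setIntegral_sub_le integrable_condExp integrable_condExp
    have h2 : ∫ ω, |(μ[⇑(fn n)|mK]) ω - (μ[ψ|mK]) ω| ∂μ
        = ∫ ω, |(μ[⇑(fn n) - ψ|mK]) ω| ∂μ := by
      refine integral_congr_ae ?_
      filter_upwards [condExp_sub (μ := μ) (m := mK) (hint_simple (fn n)) hintψ] with ω hω
      rw [hω, Pi.sub_apply]
    have h3 := integral_abs_condExp_le (μ := μ) (m := mK) (⇑(fn n) - ψ)
    have h4 : ∫ ω, |(⇑(fn n) - ψ) ω| ∂μ = ∫ ω, |fn n ω - ψ ω| ∂μ := by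
      congr 1
    calc |(∫ ω in S, (μ[⇑(fn n)|mK]) ω ∂μ) - ∫ ω in S, (μ[ψ|mK]) ω ∂μ|
        ≤ ∫ ω, |(μ[⇑(fn n)|mK]) ω - (μ[ψ|mK]) ω| ∂μ := h1
      _ = ∫ ω, |(μ[⇑(fn n) - ψ|mK]) ω| ∂μ := h2
      _ ≤ ∫ ω, |(⇑(fn n) - ψ) ω| ∂μ := h3
      _ = ∫ ω, |fn n ω - ψ ω| ∂μ := h4
  exact tendsto_nhds_unique (hL.congr fun n => hsimple (fn n)) hR

end Generic3


section Generic4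
variable {α : Type*} {m m' mF mF₁ mG mH mH' mK mK₁ : MeasurableSpace α}
  [mα : MeasurableSpace α] {μ : Measure α} [IsFiniteMeasure μ]

/-- Indicator congruence under a.e. equality of the inner function. -/
lemma indicator_congr_ae {k : Set α} {f g : α → ℝ} (h : f =ᵐ[μ] g) :
    k.indicator f =ᵐ[μ] k.indicator g := by
  filter_upwards [h] with ω hω
  by_cases hk : ω ∈ k <;> simp [Set.indicator, hk, hω]

/-- From the product form of conditional independence to the "doubling" form. -/
lemma doubling_of_product (hG : mG ≤ mα) (hH : mH ≤ mα) (hK : mK ≤ mα)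
    (hprod : ∀ g h : Set α, MeasurableSet[mG] g → MeasurableSet[mH] h →
      (μ[((g ∩ h).indicator fun _ => (1 : ℝ))|mK]) =ᵐ[μ]
        fun ω => (μ[(g.indicator fun _ => (1 : ℝ))|mK]) ω *
          (μ[(h.indicator fun _ => (1 : ℝ))|mK]) ω) :
    ∀ h, MeasurableSet[mH] h →
      μ[(h.indicator fun _ => (1 : ℝ))|mG ⊔ mK] =ᵐ[μ]
        μ[(h.indicator fun _ => (1 : ℝ))|mK] := by
  intro h hh
  have hGK : mG ⊔ mK ≤ mα := sup_le hG hK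
  have hhm : MeasurableSet[mα] h := hH h hh
  have hint : Integrable (h.indicator fun _ => (1 : ℝ)) μ := integrable_ind hhm
  refine (ae_condexp_eq_of_forall_setIntegral hGK hint integrable_condExp
    ((stronglyMeasurable_condExp.mono (le_sup_right : mK ≤ mG ⊔ mK)).aestronglyMeasurable) ?_).symm
  intro S hS
  refine setIntegral_ext_of_generateFrom hGK (sup_eq_generateFrom_piPairs mG mK)
    isPiSystem_piPairs integrable_condExp hint (integral_condExp hK) ?_ S hS
  rintro S' ⟨g, k, hg, hk, rfl⟩
  have hgm : MeasurableSet[mα] g := hG g hg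
  have hkm : MeasurableSet[mα] k := hK k hk
  have hφsm : StronglyMeasurable[mK] (μ[(h.indicator fun _ => (1 : ℝ))|mK]) :=
    stronglyMeasurable_condExp
  have hφb : ∀ᵐ ω ∂μ, ‖(μ[(h.indicator fun _ => (1 : ℝ))|mK]) ω‖ ≤ 1 :=
    condexp_ind_norm_le hK hhm
  have hintg : Integrable (g.indicator fun _ => (1 : ℝ)) μ := integrable_ind hgm
  have hintprod : Integrable
      ((μ[(h.indicator fun _ => (1 : ℝ))|mK]) * g.indicator fun _ => (1 : ℝ)) μ := by
    refine integrable_of_ae_bdd ?_ 1 ?_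
    · exact ((hφsm.mono hK).mul (stronglyMeasurable_const.indicator hgm)).aestronglyMeasurable
    · filter_upwards [hφb] with ω hω
      rw [Pi.mul_apply, norm_mul]
      have := ind_norm_le_one g ω
      calc ‖(μ[(h.indicator fun _ => (1 : ℝ))|mK]) ω‖ * ‖(g.indicator fun _ => (1:ℝ)) ω‖
          ≤ 1 * 1 := by
            exact mul_le_mul hω this (norm_nonneg _) zero_le_one
        _ = 1 := one_mul 1
  have e1 : g.indicator (μ[(h.indicator fun _ => (1 : ℝ))|mK])
      = (μ[(h.indicator fun _ => (1 : ℝ))|mK]) * g.indicator fun _ => (1 : ℝ) := by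
    funext ω
    by_cases hω : ω ∈ g <;> simp [Set.indicator, hω]
  have hintgφ : Integrable (g.indicator (μ[(h.indicator fun _ => (1 : ℝ))|mK])) μ := by
    rw [e1]; exact hintprod
  have l3 : μ[g.indicator (μ[(h.indicator fun _ => (1 : ℝ))|mK])|mK] =ᵐ[μ]
      (μ[(h.indicator fun _ => (1 : ℝ))|mK]) * μ[(g.indicator fun _ => (1 : ℝ))|mK] := by
    rw [e1]
    exact condExp_mul_of_stronglyMeasurable_left hφsm hintprod hintg
  have l4 : ((μ[(h.indicator fun _ => (1 : ℝ))|mK]) * μ[(g.indicator fun _ => (1 : ℝ))|mK])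
      =ᵐ[μ] μ[((g ∩ h).indicator fun _ => (1 : ℝ))|mK] := by
    filter_upwards [hprod g h hg hh] with ω hω
    rw [Pi.mul_apply, hω, mul_comm]
  calc ∫ ω in g ∩ k, (μ[(h.indicator fun _ => (1 : ℝ))|mK]) ω ∂μ
      = ∫ ω in k, (g.indicator (μ[(h.indicator fun _ => (1 : ℝ))|mK])) ω ∂μ := by
        rw [setIntegral_indicator hgm, Set.inter_comm k g]
    _ = ∫ ω in k, (μ[g.indicator (μ[(h.indicator fun _ => (1 : ℝ))|mK])|mK]) ω ∂μ :=
        (setIntegral_condExp hK hintgφ hk).symm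
    _ = ∫ ω in k, (μ[((g ∩ h).indicator fun _ => (1 : ℝ))|mK]) ω ∂μ :=
        integral_congr_ae (ae_restrict_of_ae (l3.trans l4))
    _ = ∫ ω in k, ((g ∩ h).indicator fun _ => (1 : ℝ)) ω ∂μ :=
        setIntegral_condExp hK (integrable_ind (hgm.inter hhm)) hk
    _ = ∫ ω in g ∩ k, (h.indicator fun _ => (1 : ℝ)) ω ∂μ := by
        rw [setIntegral_indicator (hgm.inter hhm), setIntegral_indicator hhm,
          show k ∩ (g ∩ h) = g ∩ k ∩ h by ext ω; simp only [Set.mem_inter_iff]; tauto]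

/-- Extension of the "doubling" property from `mK₁` to `mK ⊔ mK₁`. -/
lemma doubling_sup (hG : mG ≤ mα) (hK : mK ≤ mα) (hK₁ : mK₁ ≤ mα) (hKG : mK ≤ mG)
    (hd : ∀ e, MeasurableSet[mK₁] e →
      μ[(e.indicator fun _ => (1 : ℝ))|mG] =ᵐ[μ] μ[(e.indicator fun _ => (1 : ℝ))|mK]) :
    ∀ e, MeasurableSet[mK ⊔ mK₁] e →
      μ[(e.indicator fun _ => (1 : ℝ))|mG] =ᵐ[μ] μ[(e.indicator fun _ => (1 : ℝ))|mK] := by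
  have hKK₁ : mK ⊔ mK₁ ≤ mα := sup_le hK hK₁
  have hpair : ∀ k d, MeasurableSet[mK] k → MeasurableSet[mK₁] d →
      μ[((k ∩ d).indicator fun _ => (1 : ℝ))|mG] =ᵐ[μ]
        μ[((k ∩ d).indicator fun _ => (1 : ℝ))|mK] := by
    intro k d hk hd'
    have i1 : ((k ∩ d).indicator fun _ => (1 : ℝ))
        = k.indicator (d.indicator fun _ => (1 : ℝ)) := (Set.indicator_indicator k d _).symm
    have hdint : Integrable (d.indicator fun _ => (1 : ℝ)) μ := integrable_ind (hK₁ d hd')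
    have c1 := condExp_indicator (m := mG) (μ := μ) hdint (hKG k hk)
    have c2 := condExp_indicator (m := mK) (μ := μ) hdint hk
    rw [i1]
    calc μ[k.indicator (d.indicator fun _ => (1 : ℝ))|mG]
        =ᵐ[μ] k.indicator (μ[(d.indicator fun _ => (1 : ℝ))|mG]) := c1
      _ =ᵐ[μ] k.indicator (μ[(d.indicator fun _ => (1 : ℝ))|mK]) := indicator_congr_ae (hd d hd')
      _ =ᵐ[μ] μ[k.indicator (d.indicator fun _ => (1 : ℝ))|mK] := c2.symm
  intro e he
  have heα : MeasurableSet[mα] e := hKK₁ e he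
  refine (ae_condexp_eq_of_forall_setIntegral hG (integrable_ind heα) integrable_condExp
    ((stronglyMeasurable_condExp.mono hKG).aestronglyMeasurable) ?_).symm
  intro S hS
  have hSα : MeasurableSet[mα] S := hG S hS
  have hbase : ∀ h ∈ piPairs mK mK₁, ∫ ω in S, (h.indicator fun _ => (1 : ℝ)) ω ∂μ
      = ∫ ω in S, (μ[h.indicator fun _ => (1 : ℝ)|mK]) ω ∂μ := by
    rintro h ⟨k, d, hk, hd', rfl⟩
    have hint : Integrable ((k ∩ d).indicator fun _ => (1 : ℝ)) μ :=
      integrable_ind (hKK₁ _ (MeasurableSet.inter ((le_sup_left : mK ≤ mK ⊔ mK₁) k hk)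
        ((le_sup_right : mK₁ ≤ mK ⊔ mK₁) d hd')))
    calc ∫ ω in S, ((k ∩ d).indicator fun _ => (1 : ℝ)) ω ∂μ
        = ∫ ω in S, (μ[(k ∩ d).indicator fun _ => (1 : ℝ)|mG]) ω ∂μ :=
          (setIntegral_condExp hG hint hS).symm
      _ = ∫ ω in S, (μ[(k ∩ d).indicator fun _ => (1 : ℝ)|mK]) ω ∂μ :=
          integral_congr_ae (ae_restrict_of_ae (hpair k d hk hd'))
  exact (setIntegral_ind_condexp_ext hK hKK₁ (sup_eq_generateFrom_piPairs mK mK₁)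
    isPiSystem_piPairs (S := S) hbase e he).symm

/-- Doubling at the level of bounded measurable functions. -/
lemma doubling_fun (hG : mG ≤ mα) (hK : mK ≤ mα) (hH : mH ≤ mα) (hKG : mK ≤ mG)
    (hd : ∀ e, MeasurableSet[mH] e →
      μ[(e.indicator fun _ => (1 : ℝ))|mG] =ᵐ[μ] μ[(e.indicator fun _ => (1 : ℝ))|mK])
    {ψ : α → ℝ} (hψ : StronglyMeasurable[mH] ψ) (hbdd : ∀ ω, ‖ψ ω‖ ≤ 1) :
    μ[ψ|mG] =ᵐ[μ] μ[ψ|mK] := by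
  have hintψ : Integrable ψ μ :=
    integrable_of_ae_bdd ((hψ.mono hH).aestronglyMeasurable) 1 (Filter.Eventually.of_forall hbdd)
  refine (ae_condexp_eq_of_forall_setIntegral hG hintψ integrable_condExp
    ((stronglyMeasurable_condExp.mono hKG).aestronglyMeasurable) ?_).symm
  intro S hS
  have hbase : ∀ h, MeasurableSet[mH] h → ∫ ω in S, (h.indicator fun _ => (1 : ℝ)) ω ∂μ
      = ∫ ω in S, (μ[h.indicator fun _ => (1 : ℝ)|mK]) ω ∂μ := by
    intro h hh
    calc ∫ ω in S, (h.indicator fun _ => (1 : ℝ)) ω ∂μ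
        = ∫ ω in S, (μ[h.indicator fun _ => (1 : ℝ)|mG]) ω ∂μ :=
          (setIntegral_condExp hG (integrable_ind (hH h hh)) hS).symm
      _ = ∫ ω in S, (μ[h.indicator fun _ => (1 : ℝ)|mK]) ω ∂μ :=
          integral_congr_ae (ae_restrict_of_ae (hd h hh))
  exact (setIntegral_eq_condexp_of_bounded hH hK (S := S) hbase hψ hbdd).symm

/-- From the "doubling" form back to the product form of conditional independence. -/
lemma product_of_doubling (hG : mG ≤ mα) (hH : mH ≤ mα) (hK : mK ≤ mα)
    (hdoub : ∀ h, MeasurableSet[mH] h →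
      μ[(h.indicator fun _ => (1 : ℝ))|mG ⊔ mK] =ᵐ[μ] μ[(h.indicator fun _ => (1 : ℝ))|mK]) :
    ∀ g h : Set α, MeasurableSet[mG] g → MeasurableSet[mH] h →
      (μ[((g ∩ h).indicator fun _ => (1 : ℝ))|mK]) =ᵐ[μ]
        fun ω => (μ[(g.indicator fun _ => (1 : ℝ))|mK]) ω *
          (μ[(h.indicator fun _ => (1 : ℝ))|mK]) ω := by
  intro g h hg hh
  have hGK : mG ⊔ mK ≤ mα := sup_le hG hK
  have hgm : MeasurableSet[mα] g := hG g hg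
  have hhm : MeasurableSet[mα] h := hH h hh
  have hinth : Integrable (h.indicator fun _ => (1 : ℝ)) μ := integrable_ind hhm
  have e0 : ((g ∩ h).indicator fun _ => (1 : ℝ))
      = g.indicator (h.indicator fun _ => (1 : ℝ)) := (Set.indicator_indicator g h _).symm
  have t1 : μ[((g ∩ h).indicator fun _ => (1 : ℝ))|mK] =ᵐ[μ]
      μ[μ[((g ∩ h).indicator fun _ => (1 : ℝ))|mG ⊔ mK]|mK] :=
    (condExp_condExp_of_le le_sup_right hGK).symm
  have t2 : μ[((g ∩ h).indicator fun _ => (1 : ℝ))|mG ⊔ mK] =ᵐ[μ]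
      g.indicator (μ[(h.indicator fun _ => (1 : ℝ))|mK]) := by
    rw [e0]
    exact (condExp_indicator hinth ((le_sup_left : mG ≤ mG ⊔ mK) g hg)).trans
      (indicator_congr_ae (hdoub h hh))
  have e1 : g.indicator (μ[(h.indicator fun _ => (1 : ℝ))|mK])
      = (μ[(h.indicator fun _ => (1 : ℝ))|mK]) * g.indicator fun _ => (1 : ℝ) := by
    funext ω
    by_cases hω : ω ∈ g <;> simp [Set.indicator, hω]
  have hφb : ∀ᵐ ω ∂μ, ‖(μ[(h.indicator fun _ => (1 : ℝ))|mK]) ω‖ ≤ 1 :=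
    condexp_ind_norm_le hK hhm
  have hintprod : Integrable
      ((μ[(h.indicator fun _ => (1 : ℝ))|mK]) * g.indicator fun _ => (1 : ℝ)) μ := by
    refine integrable_of_ae_bdd ?_ 1 ?_
    · exact ((stronglyMeasurable_condExp.mono hK).mul
        (stronglyMeasurable_const.indicator hgm)).aestronglyMeasurable
    · filter_upwards [hφb] with ω hω
      rw [Pi.mul_apply, norm_mul]
      calc ‖(μ[(h.indicator fun _ => (1 : ℝ))|mK]) ω‖ * ‖(g.indicator fun _ => (1:ℝ)) ω‖
          ≤ 1 * 1 := mul_le_mul hω (ind_norm_le_one g ω) (norm_nonneg _) zero_le_one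
        _ = 1 := one_mul 1
  have t3 : μ[g.indicator (μ[(h.indicator fun _ => (1 : ℝ))|mK])|mK] =ᵐ[μ]
      (μ[(h.indicator fun _ => (1 : ℝ))|mK]) * μ[(g.indicator fun _ => (1 : ℝ))|mK] := by
    rw [e1]
    exact condExp_mul_of_stronglyMeasurable_left stronglyMeasurable_condExp hintprod
      (integrable_ind hgm)
  refine t1.trans ((condExp_congr_ae t2).trans (t3.trans ?_))
  refine Filter.Eventually.of_forall fun ω => ?_
  rw [Pi.mul_apply, mul_comm]

end Generic4


section Generic5
variable {α : Type*} {m m' mF mF₁ mG mH mH' mK mK₁ : MeasurableSpace α}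
  [mα : MeasurableSpace α] {μ : Measure α} [IsFiniteMeasure μ]

/-- Conditioning on any σ-algebra between `mK₁` and (a.e.) `mF₁ ⊔ mK₁` gives the same
conditional expectation for indicators of `mH'`-sets. -/
lemma dagger_aux (hF₁ : mF₁ ≤ mα) (hK₁ : mK₁ ≤ mα) (hH' : mH' ≤ mα)
    (hIH : ∀ h', MeasurableSet[mH'] h' →
      μ[(h'.indicator fun _ => (1 : ℝ))|mF₁ ⊔ mK₁] =ᵐ[μ]
        μ[(h'.indicator fun _ => (1 : ℝ))|mK₁])
    (hK₁m : mK₁ ≤ m') (hm' : m' ≤ mα) (hm'ae : m' ≤ aeClose μ (mF₁ ⊔ mK₁)) :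
    ∀ h', MeasurableSet[mH'] h' →
      μ[(h'.indicator fun _ => (1 : ℝ))|m'] =ᵐ[μ]
        μ[(h'.indicator fun _ => (1 : ℝ))|mK₁] := by
  have hF₁K₁ : mF₁ ⊔ mK₁ ≤ mα := sup_le hF₁ hK₁
  intro h' hh'
  have hh'α : MeasurableSet[mα] h' := hH' h' hh'
  refine (ae_condexp_eq_of_forall_setIntegral hm' (integrable_ind hh'α) integrable_condExp
    ((stronglyMeasurable_condExp.mono hK₁m).aestronglyMeasurable) ?_).symm
  intro S hS
  obtain ⟨S', hS', hae⟩ := hm'ae S hS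
  calc ∫ ω in S, (μ[(h'.indicator fun _ => (1 : ℝ))|mK₁]) ω ∂μ
      = ∫ ω in S', (μ[(h'.indicator fun _ => (1 : ℝ))|mK₁]) ω ∂μ := hae.setIntegral _
    _ = ∫ ω in S', (μ[(h'.indicator fun _ => (1 : ℝ))|mF₁ ⊔ mK₁]) ω ∂μ :=
        (integral_congr_ae (ae_restrict_of_ae (hIH h' hh'))).symm
    _ = ∫ ω in S', (h'.indicator fun _ => (1 : ℝ)) ω ∂μ :=
        setIntegral_condExp hF₁K₁ (integrable_ind hh'α) hS'
    _ = ∫ ω in S, (h'.indicator fun _ => (1 : ℝ)) ω ∂μ := (hae.setIntegral _).symm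

/-- The inductive step: doubling passes from the future of `mF₁, mK₁` to `mK ⊔ mH'`. -/
lemma step_doubling
    (hF : mF ≤ mα) (hF₁ : mF₁ ≤ mα) (hK : mK ≤ mα) (hK₁ : mK₁ ≤ mα) (hH' : mH' ≤ mα)
    (hsub : mF ⊔ mK ⊔ mK₁ ≤ aeClose μ (mF₁ ⊔ mK₁))
    (hMar2 : ∀ e, MeasurableSet[mK ⊔ mK₁] e →
      μ[(e.indicator fun _ => (1 : ℝ))|mF ⊔ mK] =ᵐ[μ] μ[(e.indicator fun _ => (1 : ℝ))|mK])
    (hIH : ∀ h', MeasurableSet[mH'] h' →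
      μ[(h'.indicator fun _ => (1 : ℝ))|mF₁ ⊔ mK₁] =ᵐ[μ]
        μ[(h'.indicator fun _ => (1 : ℝ))|mK₁]) :
    ∀ h, MeasurableSet[mK ⊔ mH'] h →
      μ[(h.indicator fun _ => (1 : ℝ))|mF ⊔ mK] =ᵐ[μ]
        μ[(h.indicator fun _ => (1 : ℝ))|mK] := by
  have hFK : mF ⊔ mK ≤ mα := sup_le hF hK
  have hBig : mF ⊔ mK ⊔ mK₁ ≤ mα := sup_le hFK hK₁
  have hF₁K₁ : mF₁ ⊔ mK₁ ≤ mα := sup_le hF₁ hK₁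
  have hKH : mK ⊔ mH' ≤ mα := sup_le hK hH'
  have hKK₁Big : mK ⊔ mK₁ ≤ mF ⊔ mK ⊔ mK₁ :=
    sup_le ((le_sup_right : mK ≤ mF ⊔ mK).trans le_sup_left) le_sup_right
  have hdagger := fun (m₂ : MeasurableSpace α) => dagger_aux (mα := mα) (μ := μ) (m' := m₂)
    (mF₁ := mF₁) (mK₁ := mK₁) (mH' := mH') hF₁ hK₁ hH' hIH
  -- the Markov hypothesis at the level of bounded functions
  have hpsidoub : ∀ ψ : α → ℝ, StronglyMeasurable[mK ⊔ mK₁] ψ → (∀ ω, ‖ψ ω‖ ≤ 1) →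
      μ[ψ|mF ⊔ mK] =ᵐ[μ] μ[ψ|mK] := fun ψ hψ hb =>
    doubling_fun hFK hK (sup_le hK hK₁) le_sup_right hMar2 hψ hb
  -- the chain for sets of the π-system
  have hbasepair : ∀ k₀ h₁, MeasurableSet[mK] k₀ → MeasurableSet[mH'] h₁ →
      μ[((k₀ ∩ h₁).indicator fun _ => (1 : ℝ))|mF ⊔ mK] =ᵐ[μ]
        μ[((k₀ ∩ h₁).indicator fun _ => (1 : ℝ))|mK] := by
    intro k₀ h₁ hk₀ hh₁
    have hk₀α : MeasurableSet[mα] k₀ := hK k₀ hk₀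
    have hh₁α : MeasurableSet[mα] h₁ := hH' h₁ hh₁
    set φt : α → ℝ :=
      fun ω => max 0 (min 1 ((μ[(h₁.indicator fun _ => (1 : ℝ))|mK₁]) ω)) with hφt
    have hφm : Measurable[mK₁] (μ[(h₁.indicator fun _ => (1 : ℝ))|mK₁]) :=
      stronglyMeasurable_condExp.measurable
    have hφtm : StronglyMeasurable[mK₁] φt := by
      have h1 : Measurable[mK₁] fun ω => min 1 ((μ[(h₁.indicator fun _ => (1 : ℝ))|mK₁]) ω) :=
        measurable_const.min hφm
      exact (measurable_const.max h1).stronglyMeasurable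
    have hφtb : ∀ ω, ‖φt ω‖ ≤ 1 := by
      intro ω
      rw [Real.norm_eq_abs, abs_le]
      constructor
      · have := le_max_left (0 : ℝ) (min 1 ((μ[(h₁.indicator fun _ => (1 : ℝ))|mK₁]) ω))
        simp only [hφt]; linarith
      · simp only [hφt]
        exact max_le zero_le_one (min_le_left _ _)
    have hφae : φt =ᵐ[μ] μ[(h₁.indicator fun _ => (1 : ℝ))|mK₁] := by
      filter_upwards [condexp_ind_nonneg (μ := μ) (m := mK₁) h₁,
        condexp_ind_le_one hK₁ hh₁α] with ω h0 h1
      simp only [Pi.zero_apply] at h0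
      simp only [hφt]
      rw [min_eq_right h1, max_eq_right h0]
    have hψm : StronglyMeasurable[mK ⊔ mK₁] (k₀.indicator φt) :=
      (hφtm.mono le_sup_right).indicator ((le_sup_left : mK ≤ mK ⊔ mK₁) k₀ hk₀)
    have hψb : ∀ ω, ‖k₀.indicator φt ω‖ ≤ 1 := by
      intro ω
      by_cases hω : ω ∈ k₀
      · rw [Set.indicator_of_mem hω]; exact hφtb ω
      · rw [Set.indicator_of_notMem hω]; simp
    have hbang : μ[k₀.indicator φt|mF ⊔ mK] =ᵐ[μ] μ[k₀.indicator φt|mK] :=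
      hpsidoub _ hψm hψb
    have hd1 := hdagger (mF ⊔ mK ⊔ mK₁) le_sup_right hBig hsub h₁ hh₁
    have hd2 := hdagger (mK ⊔ mK₁) le_sup_right (sup_le hK hK₁)
      (hKK₁Big.trans hsub) h₁ hh₁
    have i1 : ((k₀ ∩ h₁).indicator fun _ => (1 : ℝ))
        = k₀.indicator (h₁.indicator fun _ => (1 : ℝ)) :=
      (Set.indicator_indicator k₀ h₁ _).symm
    have c1 : μ[((k₀ ∩ h₁).indicator fun _ => (1 : ℝ))|mF ⊔ mK] =ᵐ[μ]
        μ[k₀.indicator φt|mF ⊔ mK] := by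
      have tower := (condExp_condExp_of_le (le_sup_left : mF ⊔ mK ≤ mF ⊔ mK ⊔ mK₁) hBig
        (f := (k₀ ∩ h₁).indicator fun _ => (1 : ℝ)) (μ := μ)).symm
      have inner : μ[((k₀ ∩ h₁).indicator fun _ => (1 : ℝ))|mF ⊔ mK ⊔ mK₁] =ᵐ[μ]
          k₀.indicator φt := by
        rw [i1]
        refine (condExp_indicator (integrable_ind hh₁α)
          (((le_sup_right : mK ≤ mF ⊔ mK).trans le_sup_left :
            mK ≤ mF ⊔ mK ⊔ mK₁) k₀ hk₀)).trans ?_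
        exact indicator_congr_ae (hd1.trans hφae.symm)
      exact tower.trans (condExp_congr_ae inner)
    have c2 : μ[((k₀ ∩ h₁).indicator fun _ => (1 : ℝ))|mK] =ᵐ[μ]
        μ[k₀.indicator φt|mK] := by
      have tower := (condExp_condExp_of_le (le_sup_left : mK ≤ mK ⊔ mK₁) (sup_le hK hK₁)
        (f := (k₀ ∩ h₁).indicator fun _ => (1 : ℝ)) (μ := μ)).symm
      have inner : μ[((k₀ ∩ h₁).indicator fun _ => (1 : ℝ))|mK ⊔ mK₁] =ᵐ[μ]
          k₀.indicator φt := by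
        rw [i1]
        refine (condExp_indicator (integrable_ind hh₁α)
          ((le_sup_left : mK ≤ mK ⊔ mK₁) k₀ hk₀)).trans ?_
        exact indicator_congr_ae (hd2.trans hφae.symm)
      exact tower.trans (condExp_congr_ae inner)
    exact c1.trans (hbang.trans c2.symm)
  -- Dynkin in `h` over `mK ⊔ mH'`
  intro h hh
  refine (ae_condexp_eq_of_forall_setIntegral hFK (integrable_ind (hKH h hh))
    integrable_condExp
    ((stronglyMeasurable_condExp.mono (le_sup_right : mK ≤ mF ⊔ mK)).aestronglyMeasurable) ?_).symm
  intro S hS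
  have hbase : ∀ h' ∈ piPairs mK mH', ∫ ω in S, (h'.indicator fun _ => (1 : ℝ)) ω ∂μ
      = ∫ ω in S, (μ[h'.indicator fun _ => (1 : ℝ)|mK]) ω ∂μ := by
    rintro h' ⟨k₀, h₁, hk₀, hh₁, rfl⟩
    calc ∫ ω in S, ((k₀ ∩ h₁).indicator fun _ => (1 : ℝ)) ω ∂μ
        = ∫ ω in S, (μ[(k₀ ∩ h₁).indicator fun _ => (1 : ℝ)|mF ⊔ mK]) ω ∂μ :=
          (setIntegral_condExp hFK
            (integrable_ind ((hK k₀ hk₀).inter (hH' h₁ hh₁))) hS).symm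
      _ = ∫ ω in S, (μ[(k₀ ∩ h₁).indicator fun _ => (1 : ℝ)|mK]) ω ∂μ :=
          integral_congr_ae (ae_restrict_of_ae (hbasepair k₀ h₁ hk₀ hh₁))
  exact (setIntegral_ind_condexp_ext hK hKH (sup_eq_generateFrom_piPairs mK mH')
    isPiSystem_piPairs (S := S) hbase h hh).symm

end Generic5


section OmegaLand
variable {𝒜 : Set (Set T)} {X : Set T → Ω → ℝ} {P : Measure Ω} [IsProbabilityMeasure P]

/-- Each `X_B`, `B ∈ 𝒜(u)`, has an a.e. version which is `ℱ_B`-measurable. -/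
lemma exists_filt_version (h𝒜 : IsIndexing 𝒜) (hmeas : MeasOnAu 𝒜 X)
    (hadd : AddExtension 𝒜 P X) :
    ∀ B ∈ Au 𝒜, ∃ Y, Measurable[filt 𝒜 X B] Y ∧ X B =ᵐ[P] Y := by
  have haux : ∀ (n : ℕ) (s : Finset (Set T)), s.card ≤ n → ↑s ⊆ 𝒜 → s.Nonempty →
      ∃ Y, Measurable[filt 𝒜 X (⋃₀ ↑s)] Y ∧ X (⋃₀ ↑s) =ᵐ[P] Y := by
    intro n
    induction n with
    | zero =>
      intro s hcard hsub hne
      have := Finset.card_pos.mpr hne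
      omega
    | succ n IH =>
      intro s hcard hsub hne
      classical
      obtain ⟨A, hA⟩ := hne
      have hAmem : A ∈ 𝒜 := hsub (Finset.mem_coe.mpr hA)
      by_cases hs' : (s.erase A).Nonempty
      · have hins : s = insert A (s.erase A) := (Finset.insert_erase hA).symm
        have hUnion : ⋃₀ (↑s : Set (Set T)) = A ∪ ⋃₀ ↑(s.erase A) := by
          conv_lhs => rw [hins]
          rw [Finset.coe_insert, Set.sUnion_insert]
        have hsub' : ↑(s.erase A) ⊆ 𝒜 := fun C hC =>
          hsub ((Finset.coe_subset.mpr (Finset.erase_subset A s)) hC)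
        have hsubI : ↑((s.erase A).image fun A' => A ∩ A') ⊆ 𝒜 := by
          intro C hC
          simp only [Finset.coe_image, Set.mem_image, Finset.mem_coe] at hC
          obtain ⟨A', hA', rfl⟩ := hC
          have hpair : A ∩ A' = ⋂₀ {A, A'} := by rw [Set.sInter_pair]
          rw [hpair]
          refine h𝒜.sInter_mem _ ?_ ⟨A, by simp⟩
          rintro C (rfl | hC)
          · exact hAmem
          · rw [Set.mem_singleton_iff] at hC
            rw [hC]
            exact hsub' (Finset.mem_coe.mpr hA')
        have hIeq : ⋃₀ ↑((s.erase A).image fun A' => A ∩ A') = A ∩ ⋃₀ ↑(s.erase A) := by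
          ext x
          simp only [Set.mem_sUnion, Finset.coe_image, Set.mem_image, Finset.mem_coe,
            Set.mem_inter_iff]
          constructor
          · rintro ⟨C, ⟨A', hA', rfl⟩, hx⟩
            exact ⟨hx.1, A', hA', hx.2⟩
          · rintro ⟨hxA, C, hC, hx⟩
            exact ⟨A ∩ C, ⟨C, hC, rfl⟩, hxA, hx⟩
        have hc1 : (s.erase A).card ≤ n := by
          have := Finset.card_erase_of_mem hA
          omega
        have hc2 : ((s.erase A).image fun A' => A ∩ A').card ≤ n :=
          le_trans Finset.card_image_le hc1
        obtain ⟨Y1, hY1m, hY1⟩ := IH (s.erase A) hc1 hsub' hs'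
        obtain ⟨Y2, hY2m, hY2⟩ := IH _ hc2 hsubI (hs'.image _)
        have hmod := hadd.2 A (mem_Au_of_mem hAmem) (⋃₀ ↑(s.erase A))
          ⟨s.erase A, hsub', hs', rfl⟩
        have hsubU : A ⊆ ⋃₀ ↑s := Set.subset_sUnion_of_mem (Finset.mem_coe.mpr hA)
        have hsubU' : ⋃₀ ↑(s.erase A) ⊆ ⋃₀ (↑s : Set (Set T)) :=
          Set.sUnion_mono (Finset.coe_subset.mpr (Finset.erase_subset A s))
        have hsubI2 : ⋃₀ ↑((s.erase A).image fun A' => A ∩ A') ⊆ ⋃₀ (↑s : Set (Set T)) := by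
          rw [hIeq]
          exact Set.inter_subset_left.trans hsubU
        refine ⟨fun ω => X A ω + Y1 ω - Y2 ω, ?_, ?_⟩
        · have m1 : Measurable[filt 𝒜 X (⋃₀ ↑s)] (X A) :=
            (measurable_sigOf (X A)).mono (le_filt hAmem hsubU) le_rfl
          have m2 : Measurable[filt 𝒜 X (⋃₀ ↑s)] Y1 := hY1m.mono (filt_mono hsubU') le_rfl
          have m3 : Measurable[filt 𝒜 X (⋃₀ ↑s)] Y2 := hY2m.mono (filt_mono hsubI2) le_rfl
          exact (m1.add m2).sub m3
        · filter_upwards [hmod, hY1, hY2] with ω h1 h2 h3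
          have h3' : X (A ∩ ⋃₀ ↑(s.erase A)) ω = Y2 ω := by rw [← hIeq]; exact h3
          rw [hUnion]
          linarith
      · have hseq : s = {A} := by
          refine Finset.eq_singleton_iff_unique_mem.mpr ⟨hA, fun b hb => ?_⟩
          by_contra hne'
          exact hs' ⟨b, Finset.mem_erase.mpr ⟨hne', hb⟩⟩
        have hU : ⋃₀ (↑s : Set (Set T)) = A := by rw [hseq]; simp
        rw [hU]
        exact ⟨X A, (measurable_sigOf (X A)).mono (le_filt hAmem subset_rfl) le_rfl,
          Filter.EventuallyEq.rfl⟩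
  intro B hB
  obtain ⟨s, hsub, hne, rfl⟩ := hB
  exact haux s.card s le_rfl hsub hne

end OmegaLand


section MLsection
variable {𝒜 : Set (Set T)} {X : Set T → Ω → ℝ} {P : Measure Ω} [IsProbabilityMeasure P]

/-- The σ-algebra generated by the values of `X` along a chain of unions. -/
def Hσ (X : Set T → Ω → ℝ) : List (Set T) → Set T → MeasurableSpace Ω
  | [], B => sigOf (X B)
  | A :: l, B => sigOf (X B) ⊔ Hσ X l (A ∪ B)

/-- The end of the chain of unions. -/
def endSet : List (Set T) → Set T → Set T
  | [], B => B
  | A :: l, B => endSet l (A ∪ B)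

lemma sigOf_le_Hσ (X : Set T → Ω → ℝ) (l : List (Set T)) (B : Set T) :
    sigOf (X B) ≤ Hσ X l B := by
  cases l with
  | nil => exact le_rfl
  | cons A l => exact le_sup_left

lemma sigOf_endSet_le_Hσ (X : Set T → Ω → ℝ) :
    ∀ (l : List (Set T)) (B : Set T), sigOf (X (endSet l B)) ≤ Hσ X l B := by
  intro l
  induction l with
  | nil => intro B; exact le_rfl
  | cons A l IH => intro B; exact (IH (A ∪ B)).trans le_sup_right

lemma Hσ_le (hmeas : MeasOnAu 𝒜 X) :
    ∀ l : List (Set T), (∀ A ∈ l, A ∈ 𝒜) → ∀ B ∈ Au 𝒜, Hσ X l B ≤ mΩ := by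
  intro l
  induction l with
  | nil => intro _ B hB; exact sigOf_le (hmeas B hB)
  | cons A l IH =>
    intro hl B hB
    exact sup_le (sigOf_le (hmeas B hB))
      (IH (fun A' hA' => hl A' (List.mem_cons_of_mem _ hA')) (A ∪ B)
        (union_mem_Au (hl A List.mem_cons_self) hB))

lemma endSet_eq : ∀ (l : List (Set T)) (B : Set T), endSet l B = B ∪ ⋃₀ {A | A ∈ l} := by
  intro l
  induction l with
  | nil =>
    intro B
    simp [endSet]
  | cons A l IH =>
    intro B
    show endSet l (A ∪ B) = _
    rw [IH (A ∪ B)]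
    ext x
    simp only [Set.mem_union, Set.mem_sUnion, Set.mem_setOf_eq, List.mem_cons]
    constructor
    · rintro ((hx | hx) | ⟨C, hC, hx⟩)
      · exact Or.inr ⟨A, Or.inl rfl, hx⟩
      · exact Or.inl hx
      · exact Or.inr ⟨C, Or.inr hC, hx⟩
    · rintro (hx | ⟨C, (rfl | hC), hx⟩)
      · exact Or.inl (Or.inr hx)
      · exact Or.inl (Or.inl hx)
      · exact Or.inr ⟨C, hC, hx⟩

/-- The main induction: the doubling property for the whole chain. -/
lemma main_doubling (h𝒜 : IsIndexing 𝒜) (hmeas : MeasOnAu 𝒜 X)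
    (hadd : AddExtension 𝒜 P X) (hSM : SetMarkov 𝒜 P X) :
    ∀ l : List (Set T), (∀ A ∈ l, A ∈ 𝒜) → ∀ B ∈ Au 𝒜,
      ∀ h, MeasurableSet[Hσ X l B] h →
        P[(h.indicator fun _ => (1 : ℝ))|filt 𝒜 X B ⊔ sigOf (X B)] =ᵐ[P]
          P[(h.indicator fun _ => (1 : ℝ))|sigOf (X B)] := by
  intro l
  induction l with
  | nil =>
    intro _ B hB h hh
    have hKle : sigOf (X B) ≤ mΩ := sigOf_le (hmeas B hB)
    have hFKle : filt 𝒜 X B ⊔ sigOf (X B) ≤ mΩ :=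
      sup_le (filt_le fun A hA => hmeas A (mem_Au_of_mem hA)) hKle
    have hh' : MeasurableSet[sigOf (X B)] h := hh
    have hsm : StronglyMeasurable[sigOf (X B)] (h.indicator fun _ => (1 : ℝ)) :=
      stronglyMeasurable_const.indicator hh'
    have hint : Integrable (h.indicator fun _ => (1 : ℝ)) P := integrable_ind (hKle h hh')
    rw [condExp_of_stronglyMeasurable hKle hsm hint,
      condExp_of_stronglyMeasurable hFKle (hsm.mono le_sup_right) hint]
  | cons A l IH =>
    intro hl B hB h hh
    have hA : A ∈ 𝒜 := hl A List.mem_cons_self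
    have hl' : ∀ A' ∈ l, A' ∈ 𝒜 := fun A' hA' => hl A' (List.mem_cons_of_mem A hA')
    have hB₁ : A ∪ B ∈ Au 𝒜 := union_mem_Au hA hB
    have hmF : filt 𝒜 X B ≤ mΩ := filt_le fun A' hA' => hmeas A' (mem_Au_of_mem hA')
    have hmF₁ : filt 𝒜 X (A ∪ B) ≤ mΩ := filt_le fun A' hA' => hmeas A' (mem_Au_of_mem hA')
    have hmK : sigOf (X B) ≤ mΩ := sigOf_le (hmeas B hB)
    have hmK₁ : sigOf (X (A ∪ B)) ≤ mΩ := sigOf_le (hmeas _ hB₁)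
    have hmΔ : sigOf (fun ω => X (A ∪ B) ω - X B ω) ≤ mΩ :=
      sigOf_le ((hmeas _ hB₁).sub (hmeas B hB))
    have hmH' : Hσ X l (A ∪ B) ≤ mΩ := Hσ_le hmeas l hl' (A ∪ B) hB₁
    -- set-Markov, converted to doubling over σ(Δ)
    have hMarΔ := doubling_of_product hmF hmΔ hmK (hSM A hA B hB)
    -- extended to σ(X_B) ⊔ σ(Δ)
    have hMarsup := doubling_sup (sup_le hmF hmK) hmK hmΔ le_sup_right hMarΔ
    -- σ(X_{A∪B}) ≤ σ(X_B) ⊔ σ(Δ)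
    have hK₁leΔ : sigOf (X (A ∪ B)) ≤ sigOf (X B) ⊔ sigOf (fun ω => X (A ∪ B) ω - X B ω) := by
      have h1 : Measurable[sigOf (X B) ⊔ sigOf (fun ω => X (A ∪ B) ω - X B ω)] (X B) :=
        (measurable_sigOf (X B)).mono le_sup_left le_rfl
      have h2 : Measurable[sigOf (X B) ⊔ sigOf (fun ω => X (A ∪ B) ω - X B ω)]
          (fun ω => X (A ∪ B) ω - X B ω) :=
        (measurable_sigOf _).mono le_sup_right le_rfl
      have h3 := h2.add h1
      have h4 : Measurable[sigOf (X B) ⊔ sigOf (fun ω => X (A ∪ B) ω - X B ω)] (X (A ∪ B)) := by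
        rwa [show ((fun ω => X (A ∪ B) ω - X B ω) + X B) = X (A ∪ B) by funext ω; simp] at h3
      exact measurable_iff_comap_le.mp h4
    have hMar2 : ∀ e, MeasurableSet[sigOf (X B) ⊔ sigOf (X (A ∪ B))] e →
        P[(e.indicator fun _ => (1 : ℝ))|filt 𝒜 X B ⊔ sigOf (X B)] =ᵐ[P]
          P[(e.indicator fun _ => (1 : ℝ))|sigOf (X B)] := by
      intro e he
      exact hMarsup e ((sup_le le_sup_left hK₁leΔ) e he)
    -- a.e. inclusion into the filtration at `A ∪ B`
    have hsub : filt 𝒜 X B ⊔ sigOf (X B) ⊔ sigOf (X (A ∪ B)) ≤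
        aeClose P (filt 𝒜 X (A ∪ B) ⊔ sigOf (X (A ∪ B))) := by
      obtain ⟨Y, hYm, hXY⟩ := exists_filt_version h𝒜 hmeas hadd B hB
      refine sup_le (sup_le ?_ ?_) ?_
      · exact ((filt_mono Set.subset_union_right).trans le_sup_left).trans le_aeClose
      · exact sigOf_le_aeClose hXY
          (hYm.mono ((filt_mono Set.subset_union_right).trans le_sup_left) le_rfl)
      · exact le_sup_right.trans le_aeClose
    have hIH := IH hl' (A ∪ B) hB₁
    have hstep := step_doubling hmF hmF₁ hmK hmK₁ hmH' hsub hMar2 hIH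
    have hh' : MeasurableSet[sigOf (X B) ⊔ Hσ X l (A ∪ B)] h := hh
    exact hstep h hh'

end MLsection



/-- Comment 3: `X` is set-Markov iff for all `B ⊆ B'` in `𝒜(u)`,
`ℱ_B ⟂ σ(X_{B'∖B}) | σ(X_B)`, where `X_{B'∖B} := X_{B'} - X_B`. -/
theorem statement4 {T : Type*} [TopologicalSpace T] [CompactSpace T] [T2Space T]
    {Ω : Type*} [mΩ : MeasurableSpace Ω] (P : Measure Ω) [IsProbabilityMeasure P]
    (𝒜 : Set (Set T)) (h𝒜 : IsIndexing 𝒜)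
    (X : Set T → Ω → ℝ) (hmeas : MeasOnAu 𝒜 X) (hadd : AddExtension 𝒜 P X) :
    SetMarkov 𝒜 P X ↔
      ∀ B ∈ Au 𝒜, ∀ B' ∈ Au 𝒜, B ⊆ B' →
        CondIndepGiven P (filt 𝒜 X B)
          (sigOf fun ω => X B' ω - X B ω) (sigOf (X B)) := by
  constructor
  · intro hSM B hB B' hB' hBB'
    obtain ⟨s', hs'sub, hs'ne, hBeq⟩ := hB'
    have hl : ∀ A ∈ s'.toList, A ∈ 𝒜 := fun A hA =>
      hs'sub (Finset.mem_coe.mpr (Finset.mem_toList.mp hA))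
    have hend : endSet s'.toList B = B' := by
      rw [endSet_eq]
      have huni : ⋃₀ {A | A ∈ s'.toList} = ⋃₀ (↑s' : Set (Set T)) := by
        congr 1
        ext A
        simp [Finset.mem_toList]
      rw [huni, ← hBeq, Set.union_eq_self_of_subset_left hBB']
    have hΔle : sigOf (fun ω => X B' ω - X B ω) ≤ Hσ X s'.toList B := by
      have h1 : Measurable[Hσ X s'.toList B] (X B') := by
        rw [← hend]
        exact (measurable_sigOf _).mono (sigOf_endSet_le_Hσ X s'.toList B) le_rfl
      have h2 : Measurable[Hσ X s'.toList B] (X B) :=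
        (measurable_sigOf _).mono (sigOf_le_Hσ X s'.toList B) le_rfl
      exact measurable_iff_comap_le.mp (h1.sub h2)
    have hdoub : ∀ h, MeasurableSet[sigOf fun ω => X B' ω - X B ω] h →
        P[(h.indicator fun _ => (1 : ℝ))|filt 𝒜 X B ⊔ sigOf (X B)] =ᵐ[P]
          P[(h.indicator fun _ => (1 : ℝ))|sigOf (X B)] := fun h hh =>
      main_doubling h𝒜 hmeas hadd hSM s'.toList hl B hB h (hΔle h hh)
    intro g h hg hh
    exact product_of_doubling (filt_le fun A hA => hmeas A (mem_Au_of_mem hA))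
      (sigOf_le ((hmeas B' ⟨s', hs'sub, hs'ne, hBeq⟩).sub (hmeas B hB)))
      (sigOf_le (hmeas B hB)) hdoub g h hg hh
  · intro hfor A hA B hB
    exact hfor B hB (A ∪ B) (union_mem_Au hA hB) Set.subset_union_right

end SetIndexedMarkov
end
end
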